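/- arXiv:1108.4953 — 5 statements merged into one kernel-verified Lean document; each statement's English description precedes it below -/
import Mathlib

section
/- For every graph G on n vertices, the fractional Hadwiger number satisfies h_f(G) ≤ √(2·h(G)·n), where h(G) is the Hadwiger number of G. -/
open Finset

/-- Any two members of a bramble either share a vertex or are joined by an edge,
and each member induces a connected subgraph. -/
def IsBramble {V : Type} (G : SimpleGraph V) (B : Finset (Finset V)) : Prop :=
  (∀ A ∈ B, (G.induce (A : Set V)).Connected) ∧
    ∀ A ∈ B, ∀ A' ∈ B, (∃ v, v ∈ A ∧ v ∈ A') ∨ ∃ a ∈ A, ∃ b ∈ A', G.Adj a b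

/-- A strong bramble: any two (possibly equal) members are joined by an edge. -/
def IsStrongBramble {V : Type} (G : SimpleGraph V) (B : Finset (Finset V)) : Prop :=
  (∀ A ∈ B, (G.induce (A : Set V)).Connected) ∧
    ∀ A ∈ B, ∀ A' ∈ B, ∃ a ∈ A, ∃ b ∈ A', G.Adj a b

/-- A valid weighting: nonnegative weights whose total at every vertex is at most 1. -/
def IsValidWeight {V : Type} [DecidableEq V] (B : Finset (Finset V)) (w : Finset V → ℝ) : Prop :=
  (∀ A ∈ B, 0 ≤ w A) ∧ ∀ v : V, ∑ A ∈ B.filter (fun A => v ∈ A), w A ≤ 1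

/-- The fractional Hadwiger number. -/
noncomputable def fracHadwiger {V : Type} [Fintype V] [DecidableEq V] (G : SimpleGraph V) : ℝ :=
  sSup {h : ℝ | ∃ B : Finset (Finset V), ∃ w : Finset V → ℝ,
    IsBramble G B ∧ IsValidWeight B w ∧ h = ∑ A ∈ B, w A}

/-- The r-integral Hadwiger number: all weights multiples of 1/r. -/
noncomputable def rIntHadwiger {V : Type} [Fintype V] [DecidableEq V]
    (G : SimpleGraph V) (r : ℕ) : ℝ :=
  sSup {h : ℝ | ∃ B : Finset (Finset V), ∃ w : Finset V → ℝ,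
    IsBramble G B ∧ IsValidWeight B w ∧ (∀ A ∈ B, ∃ k : ℕ, w A = k / r) ∧
    h = ∑ A ∈ B, w A}

/-- The lower fractional Hadwiger number (using strong brambles). -/
noncomputable def lowerFracHadwiger {V : Type} [Fintype V] [DecidableEq V]
    (G : SimpleGraph V) : ℝ :=
  sSup {h : ℝ | ∃ B : Finset (Finset V), ∃ w : Finset V → ℝ,
    IsStrongBramble G B ∧ IsValidWeight B w ∧ h = ∑ A ∈ B, w A}

/-- The lower r-integral Hadwiger number. -/
noncomputable def lowerRIntHadwiger {V : Type} [Fintype V] [DecidableEq V]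
    (G : SimpleGraph V) (r : ℕ) : ℝ :=
  sSup {h : ℝ | ∃ B : Finset (Finset V), ∃ w : Finset V → ℝ,
    IsStrongBramble G B ∧ IsValidWeight B w ∧ (∀ A ∈ B, ∃ k : ℕ, w A = k / r) ∧
    h = ∑ A ∈ B, w A}

/-- `G` has a clique minor of order `t`. -/
def HasCliqueMinor {V : Type} (G : SimpleGraph V) (t : ℕ) : Prop :=
  ∃ f : Fin t → Finset V,
    (∀ i, (f i).Nonempty) ∧
    (∀ i, (G.induce ((f i : Set V))).Connected) ∧
    (∀ i j, i ≠ j → Disjoint (f i) (f j)) ∧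
    (∀ i j, i ≠ j → ∃ a ∈ f i, ∃ b ∈ f j, G.Adj a b)

/-- `G` has a clique minor of order `t` and breadth at most `d` (each part has ≤ d vertices). -/
def HasCliqueMinorBreadth {V : Type} (G : SimpleGraph V) (t : ℕ) (d : ℝ) : Prop :=
  ∃ f : Fin t → Finset V,
    (∀ i, (f i).Nonempty) ∧
    (∀ i, (G.induce ((f i : Set V))).Connected) ∧
    (∀ i j, i ≠ j → Disjoint (f i) (f j)) ∧
    (∀ i j, i ≠ j → ∃ a ∈ f i, ∃ b ∈ f j, G.Adj a b) ∧
    (∀ i, ((f i).card : ℝ) ≤ d)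

/-- The Hadwiger number: the largest order of a clique minor. -/
noncomputable def hadwigerNumber {V : Type} (G : SimpleGraph V) : ℕ :=
  sSup {t : ℕ | HasCliqueMinor G t}

/-- The lexicographic product of two graphs. -/
def lexProd {α β : Type} (G : SimpleGraph α) (H : SimpleGraph β) : SimpleGraph (α × β) where
  Adj x y := G.Adj x.1 y.1 ∨ (x.1 = y.1 ∧ H.Adj x.2 y.2)
  symm := by
    constructor
    intro x y hxy
    rcases hxy with h | ⟨h1, h2⟩
    · exact Or.inl h.symm
    · exact Or.inr ⟨h1.symm, h2.symm⟩
  loopless := by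
    constructor
    intro x hx
    rcases hx with h | ⟨_, h2⟩
    · exact G.loopless.irrefl _ h
    · exact H.loopless.irrefl _ h2

/-- The complete blow-up `G[r] = G · K_r`. -/
def completeBlowup {α : Type} (G : SimpleGraph α) (r : ℕ) : SimpleGraph (α × Fin r) :=
  lexProd G (⊤ : SimpleGraph (Fin r))

/-- The blow-up `G(r) = G · I_r`. -/
def emptyBlowup {α : Type} (G : SimpleGraph α) (r : ℕ) : SimpleGraph (α × Fin r) :=
  lexProd G (⊥ : SimpleGraph (Fin r))

/-- `H` is a minor of `G`: branch sets indexed by the vertices of `H`. -/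
def IsMinor {W V : Type} (H : SimpleGraph W) (G : SimpleGraph V) : Prop :=
  ∃ f : W → Finset V,
    (∀ u, (G.induce ((f u : Set V))).Connected) ∧
    (∀ u u', u ≠ u' → Disjoint (f u) (f u')) ∧
    (∀ u u', H.Adj u u' → ∃ a ∈ f u, ∃ b ∈ f u', G.Adj a b)

/-- The k × k grid graph. -/
def gridGraph (k : ℕ) : SimpleGraph (Fin k × Fin k) where
  Adj a b := (a.1 = b.1 ∧ (a.2.val + 1 = b.2.val ∨ b.2.val + 1 = a.2.val)) ∨
             (a.2 = b.2 ∧ (a.1.val + 1 = b.1.val ∨ b.1.val + 1 = a.1.val))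
  symm := by
    constructor
    intro a b hab
    rcases hab with ⟨h1, h2⟩ | ⟨h1, h2⟩
    · exact Or.inl ⟨h1.symm, h2.symm⟩
    · exact Or.inr ⟨h1.symm, h2.symm⟩
  loopless := by
    constructor
    intro a ha
    rcases ha with ⟨_, h | h⟩ | ⟨_, h | h⟩ <;> omega

lemma bramble_nonempty {V : Type} {G : SimpleGraph V} {B : Finset (Finset V)}
    (hB : IsBramble G B) {A : Finset V} (hA : A ∈ B) : A.Nonempty := by
  obtain ⟨⟨v, hv⟩⟩ := (hB.1 A hA).nonempty
  exact ⟨v, by exact_mod_cast hv⟩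

lemma sum_mul_card_le {V : Type} [Fintype V] [DecidableEq V] {B : Finset (Finset V)}
    {w : Finset V → ℝ} (hw : IsValidWeight B w) :
    ∑ A ∈ B, w A * (A.card : ℝ) ≤ (Fintype.card V : ℝ) := by
  have h1 : ∀ A ∈ B, w A * (A.card : ℝ) = ∑ v : V, if v ∈ A then w A else 0 := by
    intro A hA
    rw [Finset.sum_ite_mem, Finset.univ_inter, Finset.sum_const, nsmul_eq_mul, mul_comm]
  rw [Finset.sum_congr rfl h1, Finset.sum_comm]
  calc ∑ v : V, ∑ A ∈ B, (if v ∈ A then w A else 0)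
      = ∑ v : V, ∑ A ∈ B.filter (fun A => v ∈ A), w A := by
        refine Finset.sum_congr rfl fun v _ => ?_
        rw [Finset.sum_filter]
    _ ≤ ∑ _v : V, (1 : ℝ) := Finset.sum_le_sum fun v _ => hw.2 v
    _ = (Fintype.card V : ℝ) := by simp

lemma sum_hit_le {V : Type} [Fintype V] [DecidableEq V] {B : Finset (Finset V)}
    {w : Finset V → ℝ} (hw : IsValidWeight B w) (A₀ : Finset V) :
    ∑ A ∈ B.filter (fun A => ¬ Disjoint A A₀), w A ≤ (A₀.card : ℝ) := by
  classical
  have step1 : ∑ A ∈ B.filter (fun A => ¬ Disjoint A A₀), w A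
      ≤ ∑ A ∈ B.filter (fun A => ¬ Disjoint A A₀), ∑ v ∈ A₀, (if v ∈ A then w A else 0) := by
    refine Finset.sum_le_sum fun A hA => ?_
    rw [Finset.mem_filter] at hA
    obtain ⟨v, hvA, hvA₀⟩ := Finset.not_disjoint_iff.mp hA.2
    have hAw : 0 ≤ w A := hw.1 A hA.1
    calc w A = ∑ v' ∈ {v}, (if v' ∈ A then w A else 0) := by simp [hvA]
      _ ≤ ∑ v' ∈ A₀, (if v' ∈ A then w A else 0) := by
          refine Finset.sum_le_sum_of_subset_of_nonneg (by simpa using hvA₀) fun x _ _ => ?_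
          split <;> simp [hAw]
  refine step1.trans ?_
  rw [Finset.sum_comm]
  calc ∑ v ∈ A₀, ∑ A ∈ B.filter (fun A => ¬ Disjoint A A₀), (if v ∈ A then w A else 0)
      ≤ ∑ v ∈ A₀, ∑ A ∈ B, (if v ∈ A then w A else 0) := by
        refine Finset.sum_le_sum fun v _ => ?_
        refine Finset.sum_le_sum_of_subset_of_nonneg (Finset.filter_subset _ _) fun A hA _ => ?_
        split <;> simp [hw.1 A hA]
    _ ≤ ∑ _v ∈ A₀, (1 : ℝ) := by
        refine Finset.sum_le_sum fun v _ => ?_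
        rw [← Finset.sum_filter]
        exact hw.2 v
    _ = (A₀.card : ℝ) := by simp

lemma key_lemma {V : Type} [Fintype V] [DecidableEq V] (G : SimpleGraph V) (k : ℕ) :
    ∀ (B : Finset (Finset V)) (w : Finset V → ℝ), IsBramble G B → IsValidWeight B w →
    2 * (k : ℝ) * (Fintype.card V : ℝ) < (∑ A ∈ B, w A) ^ 2 →
    ∃ S : Finset (Finset V), S ⊆ B ∧ S.card = k + 1 ∧
      ∀ A ∈ S, ∀ A' ∈ S, A ≠ A' → Disjoint A A' := by
  classical
  induction k with
  | zero =>
    intro B w hB hw hbig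
    -- W > 0, so there is a member with positive weight
    have hW0 : (0:ℝ) ≤ ∑ A ∈ B, w A := Finset.sum_nonneg fun A hA => hw.1 A hA
    have hWpos : 0 < ∑ A ∈ B, w A := by
      rcases hW0.lt_or_eq with h | h
      · exact h
      · exfalso; rw [← h] at hbig; simp at hbig
    obtain ⟨A₀, hA₀, _⟩ : ∃ A ∈ B, 0 < w A := by
      by_contra hcon
      push_neg at hcon
      have : ∑ A ∈ B, w A ≤ 0 := Finset.sum_nonpos fun A hA => hcon A hA
      linarith
    exact ⟨{A₀}, by simpa using hA₀, by simp, by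
      intro A hA A' hA' hne
      simp only [Finset.mem_singleton] at hA hA'
      exact absurd (hA.trans hA'.symm) hne⟩
  | succ k ih =>
    intro B w hB hw hbig
    set W := ∑ A ∈ B, w A with hWdef
    have hW0 : (0:ℝ) ≤ W := Finset.sum_nonneg fun A hA => hw.1 A hA
    have hn0 : (0:ℝ) ≤ (Fintype.card V : ℝ) := by positivity
    have hWpos : 0 < W := by nlinarith [hbig]
    -- positive-weight members
    set Bp := B.filter (fun A => 0 < w A) with hBp
    have hBpne : Bp.Nonempty := by
      rw [Finset.nonempty_iff_ne_empty]
      intro hc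
      have : W ≤ 0 := by
        apply Finset.sum_nonpos
        intro A hA
        by_contra hcon
        push_neg at hcon
        have : A ∈ Bp := Finset.mem_filter.mpr ⟨hA, hcon⟩
        rw [hc] at this; exact absurd this (Finset.notMem_empty _)
      linarith
    obtain ⟨A₀, hA₀p, hA₀min⟩ := Finset.exists_min_image Bp (fun A => A.card) hBpne
    have hA₀B : A₀ ∈ B := (Finset.mem_filter.mp hA₀p).1
    have hA₀ne : A₀.Nonempty := bramble_nonempty hB hA₀B
    -- W * |A₀| ≤ n
    have hsize : W * (A₀.card : ℝ) ≤ (Fintype.card V : ℝ) := by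
      have h1 : ∑ A ∈ B, w A * (A₀.card : ℝ) ≤ ∑ A ∈ B, w A * (A.card : ℝ) := by
        refine Finset.sum_le_sum fun A hA => ?_
        rcases (hw.1 A hA).lt_or_eq with h | h
        · have : A ∈ Bp := Finset.mem_filter.mpr ⟨hA, h⟩
          have := hA₀min A this
          exact mul_le_mul_of_nonneg_left (by exact_mod_cast this) (le_of_lt h)
        · rw [← h]; simp
      rw [← Finset.sum_mul] at h1
      exact h1.trans (sum_mul_card_le hw)
    -- split B
    set B' := B.filter (fun A => Disjoint A A₀) with hB'
    have hB'sub : B' ⊆ B := Finset.filter_subset _ _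
    have hB'bramble : IsBramble G B' :=
      ⟨fun A hA => hB.1 A (hB'sub hA), fun A hA A' hA' => hB.2 A (hB'sub hA) A' (hB'sub hA')⟩
    have hB'w : IsValidWeight B' w := by
      refine ⟨fun A hA => hw.1 A (hB'sub hA), fun v => ?_⟩
      refine le_trans ?_ (hw.2 v)
      refine Finset.sum_le_sum_of_subset_of_nonneg ?_ fun A hA _ => hw.1 A ?_
      · exact Finset.filter_subset_filter _ (Finset.filter_subset _ _)
      · exact (Finset.filter_subset _ _) hA
    have hsplit : W = (∑ A ∈ B', w A) + ∑ A ∈ B.filter (fun A => ¬ Disjoint A A₀), w A := by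
      rw [hWdef, hB']
      exact (Finset.sum_filter_add_sum_filter_not B _ w).symm
    have hhit := sum_hit_le hw A₀
    set W' := ∑ A ∈ B', w A with hW'def
    have hW'0 : (0:ℝ) ≤ W' := Finset.sum_nonneg fun A hA => hw.1 A (hB'sub hA)
    have hW'lb : W - (A₀.card : ℝ) ≤ W' := by linarith
    have hbig' : 2 * (k : ℝ) * (Fintype.card V : ℝ) < W' ^ 2 := by
      have hcast : ((k:ℝ) + 1) = ((k+1 : ℕ) : ℝ) := by push_cast; ring
      have hbig2 : 2 * ((k:ℝ)+1) * (Fintype.card V : ℝ) < W ^ 2 := by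
        rw [hcast]; exact hbig
      have hc0 : (0:ℝ) ≤ (A₀.card:ℝ) := by positivity
      nlinarith [sq_nonneg (W - (A₀.card : ℝ)), sq_nonneg (W' - W + (A₀.card:ℝ)),
        mul_nonneg hW'0 hW0]
    obtain ⟨S', hS'sub, hS'card, hS'disj⟩ := ih B' w hB'bramble hB'w hbig'
    have hA₀notin : A₀ ∉ S' := by
      intro hc
      have := (Finset.mem_filter.mp (hS'sub hc)).2
      exact hA₀ne.ne_empty ((Finset.disjoint_self_iff_empty _).mp this)
    refine ⟨insert A₀ S', ?_, ?_, ?_⟩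
    · intro A hA
      rcases Finset.mem_insert.mp hA with h | h
      · rw [h]; exact hA₀B
      · exact hB'sub (hS'sub h)
    · rw [Finset.card_insert_of_notMem hA₀notin, hS'card]
    · intro A hA A' hA' hne
      rcases Finset.mem_insert.mp hA with h | h <;> rcases Finset.mem_insert.mp hA' with h' | h'
      · exact absurd (h.trans h'.symm) hne
      · subst h
        exact ((Finset.mem_filter.mp (hS'sub h')).2).symm
      · subst h'
        exact (Finset.mem_filter.mp (hS'sub h)).2
      · exact hS'disj A h A' h' hne

lemma cliqueMinor_of_sub {V : Type} (G : SimpleGraph V) {B S : Finset (Finset V)}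
    (hB : IsBramble G B) (hSB : S ⊆ B)
    (hdisj : ∀ A ∈ S, ∀ A' ∈ S, A ≠ A' → Disjoint A A') :
    HasCliqueMinor G S.card := by
  classical
  refine ⟨fun i => (S.equivFin.symm i : {x // x ∈ S}).1, ?_, ?_, ?_, ?_⟩
  · intro i
    exact bramble_nonempty hB (hSB (S.equivFin.symm i).2)
  · intro i
    exact hB.1 _ (hSB (S.equivFin.symm i).2)
  · intro i j hij
    apply hdisj _ (S.equivFin.symm i).2 _ (S.equivFin.symm j).2
    intro hc
    exact hij (S.equivFin.symm.injective (Subtype.ext hc))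
  · intro i j hij
    have hne : ((S.equivFin.symm i : {x // x ∈ S}) : Finset V)
        ≠ ((S.equivFin.symm j : {x // x ∈ S}) : Finset V) := by
      intro hc
      exact hij (S.equivFin.symm.injective (Subtype.ext hc))
    have hd := hdisj _ (S.equivFin.symm i).2 _ (S.equivFin.symm j).2 hne
    rcases hB.2 _ (hSB (S.equivFin.symm i).2) _ (hSB (S.equivFin.symm j).2) with ⟨v, hv1, hv2⟩ | h
    · exact (Finset.disjoint_left.mp hd hv1 hv2).elim
    · exact h

lemma hcm_le_card {V : Type} [Fintype V] {G : SimpleGraph V} {t : ℕ}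
    (h : HasCliqueMinor G t) : t ≤ Fintype.card V := by
  classical
  obtain ⟨f, hne, _, hdisj, _⟩ := h
  have hinj : Function.Injective (fun i => (hne i).choose) := by
    intro i j hij
    by_contra hc
    have h1 := (hne i).choose_spec
    have h2 := (hne j).choose_spec
    simp only at hij
    rw [hij] at h1
    exact Finset.disjoint_left.mp (hdisj i j hc) h1 h2
  simpa using Fintype.card_le_of_injective _ hinj

/-- For every graph `G` on `n` vertices, `h_f(G) ≤ √(2·h(G)·n)`. -/
theorem fracHadwiger_le_sqrt_two_hadwiger_mul_card
    {V : Type} [Fintype V] [DecidableEq V] (G : SimpleGraph V) :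
    fracHadwiger G ≤ Real.sqrt (2 * (hadwigerNumber G : ℝ) * (Fintype.card V : ℝ)) := by
  classical
  apply csSup_le
  · exact ⟨0, ∅, fun _ => 0, ⟨by simp, by simp⟩, ⟨by simp, fun v => by simp⟩, by simp⟩
  · rintro h ⟨B, w, hB, hw, rfl⟩
    set W := ∑ A ∈ B, w A with hWdef
    by_contra hcon
    push_neg at hcon
    set t := hadwigerNumber G with ht
    have harg : (0:ℝ) ≤ 2 * (t : ℝ) * (Fintype.card V : ℝ) := by positivity
    have hsq : (Real.sqrt (2 * (t : ℝ) * (Fintype.card V : ℝ))) ^ 2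
        = 2 * (t : ℝ) * (Fintype.card V : ℝ) := Real.sq_sqrt harg
    have hWpos : 0 < W := lt_of_le_of_lt (Real.sqrt_nonneg _) hcon
    have hbig : 2 * (t : ℝ) * (Fintype.card V : ℝ) < W ^ 2 := by
      rw [← hsq]
      exact pow_lt_pow_left₀ hcon (Real.sqrt_nonneg _) two_ne_zero
    obtain ⟨S, hSB, hScard, hSdisj⟩ := key_lemma G t B w hB hw hbig
    have hminor : HasCliqueMinor G (t + 1) := by
      have := cliqueMinor_of_sub G hB hSB hSdisj
      rwa [hScard] at this
    have hbdd : BddAbove {s : ℕ | HasCliqueMinor G s} :=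
      ⟨Fintype.card V, fun s hs => hcm_le_card hs⟩
    have : t + 1 ≤ t := le_csSup hbdd hminor
    omega
end

section
/- Let G be a graph on n vertices, let 𝓑 be a bramble for G, and let w : 𝓑 → ℝ≥0 be a weight function such that for each vertex v the sum of w(B) over all B ∈ 𝓑 containing v is at most 1. If h = ∑_{B∈𝓑} w(B), then 𝓑 contains a subcollection of at least h²/(2n) pairwise vertex-disjoint subgraphs. -/
open Finset

lemma bramble_key {V : Type} [DecidableEq V] (w : Finset V → ℝ) (B : Finset (Finset V))
    (hne : ∀ A ∈ B, A.Nonempty) (hpos : ∀ A ∈ B, 0 ≤ w A)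
    (hv : ∀ v : V, ∑ A ∈ B.filter (fun A => v ∈ A), w A ≤ 1) :
    ∃ D ⊆ B, (∀ A ∈ D, ∀ A' ∈ D, A ≠ A' → Disjoint A A') ∧
      (∑ A ∈ B, w A) ^ 2 ≤ (D.card : ℝ) * ∑ A ∈ B, w A * (A.card : ℝ) := by
  induction B using Finset.strongInduction with
  | _ B IH =>
  rcases B.eq_empty_or_nonempty with rfl | hB
  · exact ⟨∅, by simp⟩
  obtain ⟨A₀, hA₀B, hmin⟩ := B.exists_min_image Finset.card hB
  have hA₀ne : A₀.Nonempty := hne A₀ hA₀B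
  set B₁ := B.filter (fun A => Disjoint A A₀) with hB₁def
  set R := B.filter (fun A => ¬ Disjoint A A₀) with hRdef
  have hA₀R : A₀ ∈ R := by
    simp only [hRdef, mem_filter]
    exact ⟨hA₀B, fun hd => hA₀ne.ne_empty (by simpa using disjoint_self.1 hd)⟩
  have hA₀nB₁ : A₀ ∉ B₁ := by
    simp only [hB₁def, mem_filter, not_and]
    intro _ hd
    exact hA₀ne.ne_empty (by simpa using disjoint_self.1 hd)
  have hB₁ssub : B₁ ⊂ B := ⟨filter_subset _ _, fun hsub => hA₀nB₁ (hsub hA₀B)⟩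
  have hvB₁ : ∀ v : V, ∑ A ∈ B₁.filter (fun A => v ∈ A), w A ≤ 1 := by
    intro v
    refine le_trans (sum_le_sum_of_subset_of_nonneg ?_ ?_) (hv v)
    · exact filter_subset_filter _ (filter_subset _ _)
    · intro A hA _
      exact hpos A (mem_of_mem_filter A hA)
  obtain ⟨D₁, hD₁B₁, hD₁disj, hD₁ineq⟩ := IH B₁ hB₁ssub
    (fun A hA => hne A (filter_subset _ _ hA))
    (fun A hA => hpos A (filter_subset _ _ hA)) hvB₁
  set W₁ := ∑ A ∈ B₁, w A with hW₁
  set w₀ := ∑ A ∈ R, w A with hw₀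
  set S₁ := ∑ A ∈ B₁, w A * (A.card : ℝ) with hS₁
  set s₀ := ∑ A ∈ R, w A * (A.card : ℝ) with hs₀
  have hWsplit : ∑ A ∈ B, w A = W₁ + w₀ :=
    (Finset.sum_filter_add_sum_filter_not B _ w).symm
  have hSsplit : ∑ A ∈ B, w A * (A.card : ℝ) = S₁ + s₀ :=
    (Finset.sum_filter_add_sum_filter_not B _ _).symm
  set a : ℝ := (A₀.card : ℝ) with ha
  have ha1 : (1 : ℝ) ≤ a := by
    simp only [ha]
    exact_mod_cast hA₀ne.card_pos
  have hw₀nn : 0 ≤ w₀ := Finset.sum_nonneg fun A hA => hpos A (mem_of_mem_filter A hA)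
  have hW₁nn : 0 ≤ W₁ := Finset.sum_nonneg fun A hA => hpos A (mem_of_mem_filter A hA)
  have hS₁nn : 0 ≤ S₁ := Finset.sum_nonneg fun A hA =>
    mul_nonneg (hpos A (mem_of_mem_filter A hA)) (Nat.cast_nonneg _)
  -- w₀ ≤ a  (double counting)
  have hw₀le : w₀ ≤ a := by
    have step1 : w₀ ≤ ∑ A ∈ R, ∑ v ∈ A₀, (if v ∈ A then w A else 0) := by
      refine Finset.sum_le_sum fun A hA => ?_
      have hAB : A ∈ B := mem_of_mem_filter A hA
      have hnd : ¬ Disjoint A A₀ := (mem_filter.1 hA).2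
      obtain ⟨v, hvA, hvA₀⟩ := Finset.not_disjoint_iff.1 hnd
      calc w A = ∑ v' ∈ {v}, (if v' ∈ A then w A else 0) := by simp [hvA]
        _ ≤ ∑ v' ∈ A₀, (if v' ∈ A then w A else 0) := by
            refine sum_le_sum_of_subset_of_nonneg (by simpa using hvA₀) ?_
            intro i _ _
            by_cases h : i ∈ A <;> simp [h, hpos A hAB]
    have step3 : ∀ v : V, ∑ A ∈ R, (if v ∈ A then w A else 0) ≤ 1 := by
      intro v
      rw [← Finset.sum_filter]
      refine le_trans (sum_le_sum_of_subset_of_nonneg ?_ ?_) (hv v)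
      · exact filter_subset_filter _ (filter_subset _ _)
      · intro A hA _
        exact hpos A (mem_of_mem_filter A hA)
    calc w₀ ≤ ∑ A ∈ R, ∑ v ∈ A₀, (if v ∈ A then w A else 0) := step1
      _ = ∑ v ∈ A₀, ∑ A ∈ R, (if v ∈ A then w A else 0) := Finset.sum_comm
      _ ≤ ∑ _v ∈ A₀, (1 : ℝ) := Finset.sum_le_sum fun v _ => step3 v
      _ = a := by simp [ha]
  -- s₀ ≥ w₀ * a
  have hs₀ge : w₀ * a ≤ s₀ := by
    rw [hw₀, hs₀, Finset.sum_mul]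
    refine Finset.sum_le_sum fun A hA => ?_
    have hAB : A ∈ B := mem_of_mem_filter A hA
    have hle : a ≤ (A.card : ℝ) := by
      simp only [ha]
      exact_mod_cast hmin A hAB
    exact mul_le_mul_of_nonneg_left hle (hpos A hAB)
  refine ⟨insert A₀ D₁, ?_, ?_, ?_⟩
  · intro A hA
    rcases Finset.mem_insert.1 hA with rfl | hA
    · exact hA₀B
    · exact filter_subset _ _ (hD₁B₁ hA)
  · intro A hA A' hA' hne'
    have hdA₀ : ∀ C ∈ D₁, Disjoint C A₀ := fun C hC => (mem_filter.1 (hD₁B₁ hC)).2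
    rcases Finset.mem_insert.1 hA with hA0 | hA <;>
      rcases Finset.mem_insert.1 hA' with hA0' | hA'
    · exact absurd (hA0.trans hA0'.symm) hne'
    · exact hA0 ▸ (hdA₀ A' hA').symm
    · exact hA0' ▸ (hdA₀ A hA)
    · exact hD₁disj A hA A' hA' hne'
  · have hA₀nD₁ : A₀ ∉ D₁ := fun hc => hA₀nB₁ (hD₁B₁ hc)
    rw [Finset.card_insert_of_notMem hA₀nD₁, hWsplit, hSsplit]
    have hw₀sq : w₀ ^ 2 ≤ w₀ * a := by nlinarith
    push_cast
    rcases Nat.eq_zero_or_pos D₁.card with h0 | h1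
    · have hW₁0 : W₁ = 0 := by
        have : W₁ ^ 2 ≤ 0 := by
          have := hD₁ineq
          rw [h0] at this
          simpa using this
        nlinarith
      rw [h0]
      push_cast
      nlinarith
    · have hk1 : (1 : ℝ) ≤ (D₁.card : ℝ) := by exact_mod_cast h1
      have hk0 : (0 : ℝ) < (D₁.card : ℝ) := lt_of_lt_of_le one_pos hk1
      have hkey : W₁ ^ 2 ≤ (D₁.card : ℝ) * S₁ := hD₁ineq
      have hs : w₀ ^ 2 ≤ s₀ := le_trans hw₀sq hs₀ge
      have h3 : 2 * W₁ * w₀ ≤ S₁ + (D₁.card : ℝ) * w₀ ^ 2 := by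
        refine le_of_mul_le_mul_left ?_ hk0
        nlinarith [sq_nonneg (W₁ - (D₁.card : ℝ) * w₀)]
      nlinarith [mul_nonneg (le_of_lt hk0) (sub_nonneg.2 hs)]


/-- a bramble with a valid weighting of total weight `h` on a graph with `n`
vertices contains at least `h²/(2n)` pairwise vertex-disjoint members. -/
theorem bramble_exists_disjoint_subcollection
    {V : Type} [Fintype V] [DecidableEq V] (G : SimpleGraph V)
    (B : Finset (Finset V)) (w : Finset V → ℝ) (h : ℝ)
    (hbr : IsBramble G B) (hw : IsValidWeight B w) (hh : h = ∑ A ∈ B, w A) :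
    ∃ D ⊆ B, h ^ 2 / (2 * (Fintype.card V : ℝ)) ≤ (D.card : ℝ) ∧
      ∀ A ∈ D, ∀ A' ∈ D, A ≠ A' → Disjoint A A' := by
  obtain ⟨hconn, -⟩ := hbr
  obtain ⟨hpos, hv⟩ := hw
  have hne : ∀ A ∈ B, A.Nonempty := by
    intro A hA
    obtain ⟨⟨v, hv'⟩⟩ := (hconn A hA).nonempty
    exact ⟨v, by exact_mod_cast hv'⟩
  obtain ⟨D, hDB, hdisj, hineq⟩ := bramble_key w B hne hpos hv
  refine ⟨D, hDB, ?_, hdisj⟩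
  have hS : ∑ A ∈ B, w A * (A.card : ℝ) ≤ (Fintype.card V : ℝ) := by
    have hrw : ∀ A ∈ B, w A * (A.card : ℝ) = ∑ v : V, (if v ∈ A then w A else 0) := by
      intro A hA
      rw [Finset.sum_ite_mem, Finset.univ_inter, Finset.sum_const, nsmul_eq_mul, mul_comm]
    rw [Finset.sum_congr rfl hrw, Finset.sum_comm]
    calc ∑ v : V, ∑ A ∈ B, (if v ∈ A then w A else 0)
        = ∑ v : V, ∑ A ∈ B.filter (fun A => v ∈ A), w A :=
          Finset.sum_congr rfl fun v _ => (Finset.sum_filter _ _).symm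
      _ ≤ ∑ _v : V, (1 : ℝ) := Finset.sum_le_sum fun v _ => hv v
      _ = (Fintype.card V : ℝ) := by simp
  have hknn : (0 : ℝ) ≤ (D.card : ℝ) := Nat.cast_nonneg _
  rcases Nat.eq_zero_or_pos (Fintype.card V) with h0 | hcpos
  · rw [h0]
    simpa using hknn
  · have hn : (0 : ℝ) < 2 * (Fintype.card V : ℝ) := by
      have : (0 : ℝ) < (Fintype.card V : ℝ) := by exact_mod_cast hcpos
      linarith
    rw [div_le_iff₀ hn]
    have h2 : h ^ 2 ≤ (D.card : ℝ) * (Fintype.card V : ℝ) :=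
      le_trans (hh ▸ hineq) (mul_le_mul_of_nonneg_left hS hknn)
    nlinarith [mul_nonneg hknn (le_of_lt (by exact_mod_cast hcpos : (0:ℝ) < (Fintype.card V : ℝ)))]
end

section
/- If a graph G has m edges, then its fractional Hadwiger number satisfies h_f(G) ≤ √(3m+1). -/
open Finset

set_option linter.unusedSectionVars false

private lemma exists_dist_lt {W : Type} (H : SimpleGraph W) (hc : H.Connected) (r v : W)
    (hv : v ≠ r) : ∃ x, H.Adj v x ∧ H.dist x r < H.dist v r := by
  obtain ⟨p, hp, hlen⟩ := hc.exists_path_of_dist v r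
  cases p with
  | nil => exact absurd rfl hv
  | @cons _ x _ h q =>
      refine ⟨x, h, ?_⟩
      have h1 : H.dist x r ≤ q.length := SimpleGraph.dist_le q
      simp only [SimpleGraph.Walk.length_cons] at hlen
      omega

private lemma conn_card_le {W : Type} [Fintype W] (H : SimpleGraph W) (hc : H.Connected) :
    Fintype.card W ≤ H.edgeSet.toFinite.toFinset.card + 1 := by
  classical
  obtain ⟨r⟩ := hc.nonempty
  have key : ∀ v : W, ∃ x, v ≠ r → H.Adj v x ∧ H.dist x r < H.dist v r := by
    intro v
    by_cases hv : v ≠ r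
    · obtain ⟨x, hx⟩ := exists_dist_lt H hc r v hv
      exact ⟨x, fun _ => hx⟩
    · exact ⟨r, fun h => absurd h hv⟩
  choose f hf using key
  have hcard : (Finset.univ.erase r).card ≤ H.edgeSet.toFinite.toFinset.card := by
    apply Finset.card_le_card_of_injOn (fun v => s(v, f v))
    · intro v hv
      simp only [Finset.mem_coe, Finset.mem_erase, Finset.mem_univ, and_true] at hv
      simp only [Finset.mem_coe, Set.Finite.mem_toFinset, SimpleGraph.mem_edgeSet]
      exact (hf v hv).1
    · intro a ha b hb hab
      simp only [Finset.coe_erase, Set.mem_diff, Set.mem_singleton_iff] at ha hb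
      rw [Sym2.eq_iff] at hab
      rcases hab with ⟨rfl, _⟩ | ⟨h1, h2⟩
      · rfl
      · exfalso
        have d1 := (hf a ha.2).2
        have d2 := (hf b hb.2).2
        rw [h2] at d1; rw [← h1] at d2
        omega
  rw [Finset.card_erase_of_mem (Finset.mem_univ r), Finset.card_univ] at hcard
  have : 0 < Fintype.card W := Fintype.card_pos_iff.mpr hc.nonempty
  omega

private lemma induced_card_le {V : Type} [Fintype V] [DecidableEq V] (G : SimpleGraph V)
    (A : Finset V) (hA : (G.induce (A : Set V)).Connected) (E : Finset (Sym2 V))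
    (hE : ∀ e, e ∈ E ↔ e ∈ G.edgeSet) :
    (A.card : ℝ) ≤ ((E.filter (fun e => ∀ x ∈ e, x ∈ A)).card : ℝ) + 1 := by
  classical
  have h1 := conn_card_le _ hA
  have hcardW : Fintype.card ↥((A : Set V)) = A.card := by simp
  have h2 : ((G.induce (A : Set V)).edgeSet.toFinite.toFinset).card
      ≤ (E.filter (fun e => ∀ x ∈ e, x ∈ A)).card := by
    apply Finset.card_le_card_of_injOn (Sym2.map Subtype.val)
    · intro e he
      simp only [Finset.mem_coe, Set.Finite.mem_toFinset] at he
      induction e with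
      | _ a b =>
        rw [SimpleGraph.mem_edgeSet] at he
        have hadj : G.Adj a.val b.val := he
        simp only [Finset.mem_coe, Finset.mem_filter, Sym2.map_pair_eq]
        refine ⟨(hE _).2 hadj, ?_⟩
        intro x hx
        rw [Sym2.mem_iff] at hx
        rcases hx with rfl | rfl
        · exact a.2
        · exact b.2
    · intro x _ y _ hxy
      exact Sym2.map.injective Subtype.val_injective hxy
  have := hcardW ▸ h1
  have hfin : A.card ≤ (E.filter (fun e => ∀ x ∈ e, x ∈ A)).card + 1 := by omega
  exact_mod_cast hfin


section Helpers
variable {V : Type} [Fintype V] [DecidableEq V] (B : Finset (Finset V)) (w : Finset V → ℝ)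

private noncomputable def wS (v : V) : ℝ := ∑ A ∈ B.filter (fun A => v ∈ A), w A
private noncomputable def wT (e : Sym2 V) : ℝ :=
  ∑ A ∈ B.filter (fun A => ∀ x ∈ e, x ∈ A), w A
private noncomputable def wQ (u v : V) : ℝ :=
  ∑ A ∈ B.filter (fun A => u ∈ A ∧ v ∉ A), w A

private lemma wS_nonneg (hw0 : ∀ A ∈ B, 0 ≤ w A) (v : V) : 0 ≤ wS B w v :=
  Finset.sum_nonneg fun A hA => hw0 A (Finset.mem_filter.1 hA).1

private lemma wT_nonneg (hw0 : ∀ A ∈ B, 0 ≤ w A) (e : Sym2 V) : 0 ≤ wT B w e :=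
  Finset.sum_nonneg fun A hA => hw0 A (Finset.mem_filter.1 hA).1

private lemma wQ_nonneg (hw0 : ∀ A ∈ B, 0 ≤ w A) (u v : V) : 0 ≤ wQ B w u v :=
  Finset.sum_nonneg fun A hA => hw0 A (Finset.mem_filter.1 hA).1

private lemma wQ_add_wT (u v : V) : wQ B w u v + wT B w s(u, v) = wS B w u := by
  have hsplit := Finset.sum_filter_add_sum_filter_not (B.filter (fun A => u ∈ A))
    (fun A => v ∈ A) w
  rw [Finset.filter_filter, Finset.filter_filter] at hsplit
  have h1 : B.filter (fun A => ∀ x ∈ s(u, v), x ∈ A) = B.filter (fun A => u ∈ A ∧ v ∈ A) := by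
    apply Finset.filter_congr
    intro A _
    constructor
    · intro h; exact ⟨h u (by simp), h v (by simp)⟩
    · rintro ⟨h1, h2⟩ x hx
      rw [Sym2.mem_iff] at hx
      rcases hx with rfl | rfl <;> assumption
  unfold wQ wT wS
  rw [h1, ← hsplit, add_comm]

private lemma sum_ite_eq_wS (v : V) :
    ∑ A ∈ B, (if v ∈ A then w A else 0) = wS B w v :=
  (Finset.sum_filter _ _).symm

private lemma sum_ite_eq_wT (e : Sym2 V) :
    ∑ A ∈ B, (if (∀ x ∈ e, x ∈ A) then w A else 0) = wT B w e :=
  (Finset.sum_filter _ _).symm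

private lemma sum_ite_eq_wQ (u v : V) :
    ∑ A ∈ B, (if u ∈ A ∧ v ∉ A then w A else 0) = wQ B w u v :=
  (Finset.sum_filter _ _).symm

end Helpers

section Key
variable {V : Type} [Fintype V] [DecidableEq V]

private lemma key_ineq (G : SimpleGraph V) (B : Finset (Finset V)) (w : Finset V → ℝ)
    (hconn : ∀ A ∈ B, (G.induce (A : Set V)).Connected)
    (hpair : ∀ A ∈ B, ∀ A' ∈ B, (∃ v, v ∈ A ∧ v ∈ A') ∨ ∃ a ∈ A, ∃ b ∈ A', G.Adj a b)
    (hw0 : ∀ A ∈ B, 0 ≤ w A) (hw1 : ∀ v : V, ∑ A ∈ B.filter (fun A => v ∈ A), w A ≤ 1)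
    (E : Finset (Sym2 V)) (hE : ∀ e, e ∈ E ↔ e ∈ G.edgeSet) :
    (∑ A ∈ B, w A)^2 ≤ (∑ A ∈ B, w A) + 2 * E.card := by
  classical
  have hS1 : ∀ v, wS B w v ≤ 1 := hw1
  have hS0 : ∀ v, 0 ≤ wS B w v := wS_nonneg B w hw0
  have hT0 : ∀ e, 0 ≤ wT B w e := wT_nonneg B w hw0
  have hQ0 : ∀ u v, 0 ≤ wQ B w u v := wQ_nonneg B w hw0
  have hQT : ∀ u v : V, wQ B w u v ≤ 1 - wT B w s(u, v) := by
    intro u v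
    have := wQ_add_wT B w u v
    have := hS1 u
    linarith
  have hT1 : ∀ u v : V, wT B w s(u, v) ≤ 1 := by
    intro u v
    have := wQ_add_wT B w u v
    have := hS1 u
    have := hQ0 u v
    linarith
  -- split the square
  have hsq : (∑ A ∈ B, w A)^2 =
      (∑ A ∈ B, ∑ A' ∈ B, (if ¬ Disjoint A A' then w A * w A' else 0)) +
      (∑ A ∈ B, ∑ A' ∈ B, (if Disjoint A A' then w A * w A' else 0)) := by
    rw [sq, Finset.sum_mul_sum, ← Finset.sum_add_distrib]
    apply Finset.sum_congr rfl
    intro A _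
    rw [← Finset.sum_add_distrib]
    apply Finset.sum_congr rfl
    intro A' _
    by_cases h : Disjoint A A' <;> simp [h]
  -- Term 1 : overlapping pairs
  have hT1bound : (∑ A ∈ B, ∑ A' ∈ B, (if ¬ Disjoint A A' then w A * w A' else 0)) ≤
      ∑ v : V, wS B w v * wS B w v := by
    have step1 : ∀ A ∈ B, ∀ A' ∈ B, (if ¬ Disjoint A A' then w A * w A' else 0) ≤
        ∑ v : V, (if v ∈ A then w A else 0) * (if v ∈ A' then w A' else 0) := by
      intro A hA A' hA'
      have hnn : ∀ v : V, 0 ≤ (if v ∈ A then w A else 0) * (if v ∈ A' then w A' else 0) := by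
        intro v
        apply mul_nonneg <;> split <;> first | exact hw0 _ ‹_› | rfl
      by_cases h : Disjoint A A'
      · simp only [h, not_true_eq_false, if_false]
        exact Finset.sum_nonneg fun v _ => hnn v
      · simp only [h, not_false_eq_true, if_true]
        obtain ⟨v0, hv0A, hv0A'⟩ := Finset.not_disjoint_iff.1 h
        have : w A * w A' = (if v0 ∈ A then w A else 0) * (if v0 ∈ A' then w A' else 0) := by
          rw [if_pos hv0A, if_pos hv0A']
        rw [this]
        exact Finset.single_le_sum (fun v _ => hnn v) (Finset.mem_univ v0)
    calc (∑ A ∈ B, ∑ A' ∈ B, (if ¬ Disjoint A A' then w A * w A' else 0))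
        ≤ ∑ A ∈ B, ∑ A' ∈ B, ∑ v : V,
            (if v ∈ A then w A else 0) * (if v ∈ A' then w A' else 0) := by
          apply Finset.sum_le_sum; intro A hA
          apply Finset.sum_le_sum; intro A' hA'
          exact step1 A hA A' hA'
      _ = ∑ A ∈ B, ∑ v : V, ∑ A' ∈ B,
            (if v ∈ A then w A else 0) * (if v ∈ A' then w A' else 0) :=
          Finset.sum_congr rfl fun A _ => Finset.sum_comm
      _ = ∑ v : V, ∑ A ∈ B, ∑ A' ∈ B,
            (if v ∈ A then w A else 0) * (if v ∈ A' then w A' else 0) :=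
          Finset.sum_comm
      _ = ∑ v : V, wS B w v * wS B w v := by
          apply Finset.sum_congr rfl
          intro v _
          rw [← Finset.sum_mul_sum, sum_ite_eq_wS]
  -- sum of wS
  have hSS : ∑ v : V, wS B w v * wS B w v ≤ ∑ v : V, wS B w v := by
    apply Finset.sum_le_sum
    intro v _
    nlinarith [hS0 v, hS1 v]
  have hSsum : ∑ v : V, wS B w v = ∑ A ∈ B, (A.card : ℝ) * w A := by
    calc ∑ v : V, wS B w v = ∑ v : V, ∑ A ∈ B, (if v ∈ A then w A else 0) := by
          apply Finset.sum_congr rfl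
          intro v _
          rw [sum_ite_eq_wS]
      _ = ∑ A ∈ B, ∑ v : V, (if v ∈ A then w A else 0) := Finset.sum_comm
      _ = ∑ A ∈ B, (A.card : ℝ) * w A := by
          apply Finset.sum_congr rfl
          intro A _
          rw [Finset.sum_ite_mem, Finset.univ_inter, Finset.sum_const, nsmul_eq_mul]
  have hcard : ∀ A ∈ B, (A.card : ℝ) * w A ≤
      w A + ((E.filter (fun e => ∀ x ∈ e, x ∈ A)).card : ℝ) * w A := by
    intro A hA
    have h1 := induced_card_le G A (hconn A hA) E hE
    have h2 := hw0 A hA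
    nlinarith
  have hTsum : ∑ A ∈ B, ((E.filter (fun e => ∀ x ∈ e, x ∈ A)).card : ℝ) * w A
      = ∑ e ∈ E, wT B w e := by
    calc ∑ A ∈ B, ((E.filter (fun e => ∀ x ∈ e, x ∈ A)).card : ℝ) * w A
        = ∑ A ∈ B, ∑ e ∈ E, (if (∀ x ∈ e, x ∈ A) then w A else 0) := by
          apply Finset.sum_congr rfl
          intro A _
          rw [← Finset.sum_filter, Finset.sum_const, nsmul_eq_mul]
      _ = ∑ e ∈ E, ∑ A ∈ B, (if (∀ x ∈ e, x ∈ A) then w A else 0) := Finset.sum_comm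
      _ = ∑ e ∈ E, wT B w e := Finset.sum_congr rfl fun e _ => sum_ite_eq_wT B w e
  -- Term 2 : disjoint pairs
  have hT2bound : (∑ A ∈ B, ∑ A' ∈ B, (if Disjoint A A' then w A * w A' else 0)) ≤
      ∑ e ∈ E, 2 * ((1 - wT B w e) * (1 - wT B w e)) := by
    have step1 : ∀ A ∈ B, ∀ A' ∈ B, (if Disjoint A A' then w A * w A' else 0) ≤
        ∑ e ∈ E, (if Disjoint A A' ∧ ∃ a ∈ A, ∃ b ∈ A', s(a, b) = e
          then w A * w A' else 0) := by
      intro A hA A' hA'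
      have hww : 0 ≤ w A * w A' := mul_nonneg (hw0 A hA) (hw0 A' hA')
      have hnn : ∀ e ∈ E, 0 ≤ (if Disjoint A A' ∧ ∃ a ∈ A, ∃ b ∈ A', s(a, b) = e
          then w A * w A' else 0) := by
        intro e _
        split
        · exact hww
        · rfl
      by_cases h : Disjoint A A'
      · rcases hpair A hA A' hA' with ⟨v, hv1, hv2⟩ | ⟨a, ha, b, hb, hab⟩
        · exact absurd hv2 (Finset.disjoint_left.1 h hv1)
        · have he0 : s(a, b) ∈ E := (hE _).2 hab
          rw [if_pos h]
          have hle := Finset.single_le_sum hnn he0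
          rwa [if_pos ⟨h, a, ha, b, hb, rfl⟩] at hle
      · rw [if_neg h]
        exact Finset.sum_nonneg hnn
    have step2 : ∀ e ∈ E, (∑ A ∈ B, ∑ A' ∈ B,
        (if Disjoint A A' ∧ ∃ a ∈ A, ∃ b ∈ A', s(a, b) = e then w A * w A' else 0)) ≤
        2 * ((1 - wT B w e) * (1 - wT B w e)) := by
      intro e he
      revert he
      induction e with
      | _ u v =>
        intro he
        have hadj : G.Adj u v := (hE _).1 he
        have hpt : ∀ A ∈ B, ∀ A' ∈ B,
            (if Disjoint A A' ∧ ∃ a ∈ A, ∃ b ∈ A', s(a, b) = s(u, v)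
              then w A * w A' else 0) ≤
            (if u ∈ A ∧ v ∉ A then w A else 0) * (if v ∈ A' ∧ u ∉ A' then w A' else 0) +
            (if v ∈ A ∧ u ∉ A then w A else 0) * (if u ∈ A' ∧ v ∉ A' then w A' else 0) := by
          intro A hA A' hA'
          have hnnA : (0:ℝ) ≤ (if u ∈ A ∧ v ∉ A then w A else 0) := by
            split; exacts [hw0 A hA, le_refl 0]
          have hnnA2 : (0:ℝ) ≤ (if v ∈ A ∧ u ∉ A then w A else 0) := by
            split; exacts [hw0 A hA, le_refl 0]
          have hnnB : (0:ℝ) ≤ (if v ∈ A' ∧ u ∉ A' then w A' else 0) := by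
            split; exacts [hw0 A' hA', le_refl 0]
          have hnnB2 : (0:ℝ) ≤ (if u ∈ A' ∧ v ∉ A' then w A' else 0) := by
            split; exacts [hw0 A' hA', le_refl 0]
          by_cases hc : Disjoint A A' ∧ ∃ a ∈ A, ∃ b ∈ A', s(a, b) = s(u, v)
          · obtain ⟨hd, a, ha, b, hb, heq⟩ := hc
            rw [if_pos ⟨hd, a, ha, b, hb, heq⟩]
            rw [Sym2.eq_iff] at heq
            rcases heq with ⟨rfl, rfl⟩ | ⟨rfl, rfl⟩
            · have h1 : a ∉ A' := Finset.disjoint_left.1 hd ha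
              have h2 : b ∉ A := Finset.disjoint_right.1 hd hb
              have e1 : (if a ∈ A ∧ b ∉ A then w A else 0) = w A := if_pos ⟨ha, h2⟩
              have e2 : (if b ∈ A' ∧ a ∉ A' then w A' else 0) = w A' := if_pos ⟨hb, h1⟩
              rw [e1, e2]
              nlinarith [mul_nonneg hnnA hnnB, mul_nonneg hnnA2 hnnB2,
                mul_nonneg hnnA hnnB2, mul_nonneg hnnA2 hnnB]
            · have h1 : a ∉ A' := Finset.disjoint_left.1 hd ha
              have h2 : b ∉ A := Finset.disjoint_right.1 hd hb
              have e1 : (if a ∈ A ∧ b ∉ A then w A else 0) = w A := if_pos ⟨ha, h2⟩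
              have e2 : (if b ∈ A' ∧ a ∉ A' then w A' else 0) = w A' := if_pos ⟨hb, h1⟩
              rw [e1, e2]
              nlinarith [mul_nonneg hnnA hnnB, mul_nonneg hnnA2 hnnB2,
                mul_nonneg hnnA hnnB2, mul_nonneg hnnA2 hnnB]
          · rw [if_neg hc]
            nlinarith [mul_nonneg hnnA hnnB, mul_nonneg hnnA2 hnnB2]
        calc (∑ A ∈ B, ∑ A' ∈ B,
            (if Disjoint A A' ∧ ∃ a ∈ A, ∃ b ∈ A', s(a, b) = s(u, v)
              then w A * w A' else 0))
            ≤ ∑ A ∈ B, ∑ A' ∈ B,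
              ((if u ∈ A ∧ v ∉ A then w A else 0) * (if v ∈ A' ∧ u ∉ A' then w A' else 0) +
               (if v ∈ A ∧ u ∉ A then w A else 0) * (if u ∈ A' ∧ v ∉ A' then w A' else 0)) := by
              apply Finset.sum_le_sum
              intro A hA
              apply Finset.sum_le_sum
              intro A' hA'
              exact hpt A hA A' hA'
          _ = (∑ A ∈ B, ∑ A' ∈ B,
                (if u ∈ A ∧ v ∉ A then w A else 0) * (if v ∈ A' ∧ u ∉ A' then w A' else 0))
              + (∑ A ∈ B, ∑ A' ∈ B,
                (if v ∈ A ∧ u ∉ A then w A else 0) * (if u ∈ A' ∧ v ∉ A' then w A' else 0)) := by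
              rw [← Finset.sum_add_distrib]
              exact Finset.sum_congr rfl fun A _ => Finset.sum_add_distrib
          _ = wQ B w u v * wQ B w v u + wQ B w v u * wQ B w u v := by
              rw [← Finset.sum_mul_sum, ← Finset.sum_mul_sum,
                sum_ite_eq_wQ, sum_ite_eq_wQ]
          _ ≤ 2 * ((1 - wT B w s(u, v)) * (1 - wT B w s(u, v))) := by
              have q1 := hQT u v
              have q2 := hQT v u
              have q3 := hQ0 u v
              have q4 := hQ0 v u
              have q5 : wT B w s(v, u) = wT B w s(u, v) := by rw [Sym2.eq_swap]
              rw [q5] at q2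
              have h1t : 0 ≤ 1 - wT B w s(u, v) := le_trans q3 q1
              nlinarith
    calc (∑ A ∈ B, ∑ A' ∈ B, (if Disjoint A A' then w A * w A' else 0))
        ≤ ∑ A ∈ B, ∑ A' ∈ B, ∑ e ∈ E,
            (if Disjoint A A' ∧ ∃ a ∈ A, ∃ b ∈ A', s(a, b) = e then w A * w A' else 0) := by
          apply Finset.sum_le_sum
          intro A hA
          apply Finset.sum_le_sum
          intro A' hA'
          exact step1 A hA A' hA'
      _ = ∑ A ∈ B, ∑ e ∈ E, ∑ A' ∈ B,
            (if Disjoint A A' ∧ ∃ a ∈ A, ∃ b ∈ A', s(a, b) = e then w A * w A' else 0) :=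
          Finset.sum_congr rfl fun A _ => Finset.sum_comm
      _ = ∑ e ∈ E, ∑ A ∈ B, ∑ A' ∈ B,
            (if Disjoint A A' ∧ ∃ a ∈ A, ∃ b ∈ A', s(a, b) = e then w A * w A' else 0) :=
          Finset.sum_comm
      _ ≤ ∑ e ∈ E, 2 * ((1 - wT B w e) * (1 - wT B w e)) := Finset.sum_le_sum step2
  -- per-edge final bound
  have hTle1 : ∀ e ∈ E, wT B w e + 2 * ((1 - wT B w e) * (1 - wT B w e)) ≤ 2 := by
    intro e he
    revert he
    induction e with
    | _ u v =>
      intro _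
      have := hT1 u v
      have := hT0 s(u, v)
      nlinarith
  -- assemble
  have hfinal : ∑ e ∈ E, wT B w e + ∑ e ∈ E, 2 * ((1 - wT B w e) * (1 - wT B w e))
      ≤ 2 * E.card := by
    rw [← Finset.sum_add_distrib]
    calc ∑ e ∈ E, (wT B w e + 2 * ((1 - wT B w e) * (1 - wT B w e)))
        ≤ ∑ _e ∈ E, (2:ℝ) := Finset.sum_le_sum hTle1
      _ = 2 * E.card := by rw [Finset.sum_const, nsmul_eq_mul, mul_comm]
  have hB1 : ∑ A ∈ B, (A.card : ℝ) * w A ≤ ∑ A ∈ B, w A + ∑ e ∈ E, wT B w e := by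
    rw [← hTsum, ← Finset.sum_add_distrib]
    exact Finset.sum_le_sum hcard
  rw [hsq]
  have c1 := le_trans hT1bound (le_trans hSS (le_of_eq hSsum))
  linarith
end Key

/-- if `G` has `m` edges then `h_f(G) ≤ √(3m+1)`. -/
theorem fracHadwiger_le_sqrt_edges
    {V : Type} [Fintype V] [DecidableEq V] (G : SimpleGraph V) (m : ℕ)
    (hm : G.edgeSet.ncard = m) :
    fracHadwiger G ≤ Real.sqrt (3 * (m : ℝ) + 1) := by
  classical
  have hs0 : (0:ℝ) ≤ Real.sqrt (3 * (m : ℝ) + 1) := Real.sqrt_nonneg _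
  refine Real.sSup_le ?_ hs0
  rintro h ⟨B, w, ⟨hconn, hpair⟩, ⟨hw0, hw1⟩, rfl⟩
  set E := G.edgeSet.toFinite.toFinset with hEdef
  have hE : ∀ e, e ∈ E ↔ e ∈ G.edgeSet := fun e => Set.Finite.mem_toFinset _
  have hEcard : (E.card : ℝ) = (m : ℝ) := by
    rw [← hm, Set.ncard_eq_toFinset_card _ G.edgeSet.toFinite]
  have hkey : (∑ A ∈ B, w A)^2 ≤ (∑ A ∈ B, w A) + 2 * E.card :=
    key_ineq G B w hconn hpair hw0 hw1 E hE
  rw [hEcard] at hkey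
  have hh0 : 0 ≤ ∑ A ∈ B, w A := Finset.sum_nonneg hw0
  set h := ∑ A ∈ B, w A
  set s := Real.sqrt (3 * (m : ℝ) + 1) with hsdef
  have hm0 : (0:ℝ) ≤ 3 * (m : ℝ) + 1 := by positivity
  have hsq : s * s = 3 * (m : ℝ) + 1 := Real.mul_self_sqrt hm0
  by_contra hcon
  push_neg at hcon
  rcases Nat.eq_zero_or_pos m with rfl | hm1
  · simp only [Nat.cast_zero, mul_zero, zero_add] at hkey hsq
    have hs1 : s = 1 := by nlinarith [Real.sqrt_nonneg (3 * ((0:ℕ) : ℝ) + 1)]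
    nlinarith
  · have hm1' : (1:ℝ) ≤ (m : ℝ) := by exact_mod_cast hm1
    have hs2 : 2 ≤ s := by nlinarith
    have hA : 0 < (h - s) * (h + s - 1) := by
      apply mul_pos
      · linarith
      · linarith
    have s3 : (m : ℝ) + 1 < s := by nlinarith
    have : 0 < ((m : ℝ) + 1) * (s - ((m : ℝ) + 1)) :=
      mul_pos (by positivity) (by linarith)
    nlinarith [sq_nonneg (s - ((m : ℝ) + 1))]
end

section
/- If a graph G has at least one edge, then h_f(G)/2 ≤ h'_f(G) ≤ h_f(G), where h_f is the fractional Hadwiger number and h'_f is the lower fractional Hadwiger number. -/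
open Finset

section AuxLemmas

variable {V : Type} [Fintype V] [DecidableEq V] {G : SimpleGraph V}

lemma conn_nonempty {A : Finset V} (h : (G.induce (A : Set V)).Connected) : A.Nonempty := by
  obtain ⟨⟨v, hv⟩⟩ := h.nonempty
  exact ⟨v, hv⟩

lemma exists_adj_of_mem {A : Finset V} (hconn : (G.induce (A : Set V)).Connected)
    (hcard : 2 ≤ A.card) {x : V} (hx : x ∈ A) : ∃ y ∈ A, G.Adj x y := by
  obtain ⟨z, hz, hzx⟩ := Finset.exists_mem_ne (s := A) (by omega) x
  have hne : (⟨x, hx⟩ : (A : Set V)) ≠ ⟨z, hz⟩ := by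
    intro h; apply hzx; exact (congrArg Subtype.val h).symm
  obtain ⟨p⟩ := hconn.preconnected ⟨x, hx⟩ ⟨z, hz⟩
  cases p with
  | nil => exact absurd rfl hne
  | cons h q =>
    rename_i b
    exact ⟨b.1, b.2, h⟩

lemma pair_connected {a b : V} (hab : G.Adj a b) :
    (G.induce ({a, b} : Set V)).Connected := by
  rw [SimpleGraph.connected_iff]
  refine ⟨?_, ⟨⟨a, by simp⟩⟩⟩
  intro x y
  have hx := x.2
  have hy := y.2
  simp only [Set.mem_insert_iff, Set.mem_singleton_iff] at hx hy
  have key : ∀ (u v : ({a, b} : Set V)), (u : V) = a → (v : V) = b →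
      (G.induce ({a, b} : Set V)).Reachable u v := by
    intro u v hu hv
    have : (G.induce ({a, b} : Set V)).Adj u v := by
      show G.Adj u v
      rw [hu, hv]; exact hab
    exact this.reachable
  rcases hx with hx | hx <;> rcases hy with hy | hy
  · have hxy : x = y := Subtype.ext (hx.trans hy.symm)
    rw [hxy]
  · exact key x y hx hy
  · exact (key y x hy hx).symm
  · have hxy : x = y := Subtype.ext (hx.trans hy.symm)
    rw [hxy]

lemma sum_le_card {B : Finset (Finset V)} {w : Finset V → ℝ}
    (hne : ∀ A ∈ B, A.Nonempty) (hw : IsValidWeight B w) :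
    ∑ A ∈ B, w A ≤ (Fintype.card V : ℝ) := by
  have h1 : ∑ A ∈ B, w A ≤ ∑ A ∈ B, (A.card : ℝ) * w A := by
    apply Finset.sum_le_sum
    intro A hA
    have h0 := hw.1 A hA
    have hc : (1 : ℝ) ≤ A.card := by exact_mod_cast (hne A hA).card_pos
    nlinarith
  have h2 : ∑ A ∈ B, (A.card : ℝ) * w A
      = ∑ v : V, ∑ A ∈ B.filter (fun A => v ∈ A), w A := by
    rw [Finset.sum_comm' (s := Finset.univ) (t' := B)
      (t := fun v => B.filter (fun A => v ∈ A))
      (s' := fun A => Finset.univ.filter (fun v => v ∈ A)) (f := fun _ A => w A)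
      (by intro v A; simp [Finset.mem_filter, and_comm])]
    apply Finset.sum_congr rfl
    intro A _
    rw [Finset.sum_const, Finset.filter_mem_eq_inter]
    simp [Finset.univ_inter, nsmul_eq_mul]
  calc ∑ A ∈ B, w A ≤ ∑ A ∈ B, (A.card : ℝ) * w A := h1
    _ = ∑ v : V, ∑ A ∈ B.filter (fun A => v ∈ A), w A := h2
    _ ≤ ∑ _v : V, (1 : ℝ) := Finset.sum_le_sum (fun v _ => hw.2 v)
    _ = (Fintype.card V : ℝ) := by simp

lemma w_le_one {B : Finset (Finset V)} {w : Finset V → ℝ} (hw : IsValidWeight B w)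
    {A : Finset V} (hA : A ∈ B) (hne : A.Nonempty) : w A ≤ 1 := by
  obtain ⟨v, hv⟩ := hne
  calc w A ≤ ∑ A' ∈ B.filter (fun A' => v ∈ A'), w A' := by
        apply Finset.single_le_sum (f := w)
        · intro i hi
          exact hw.1 i (Finset.mem_filter.mp hi).1
        · exact Finset.mem_filter.mpr ⟨hA, hv⟩
    _ ≤ 1 := hw.2 v

lemma fiber_sum (B : Finset (Finset V)) (g : Finset V → Finset V) (w : Finset V → ℝ)
    (p : Finset V → Prop) [DecidablePred p] :
    ∑ C ∈ (B.image g).filter p, ∑ A ∈ B.filter (fun A => g A = C), w A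
      = ∑ A ∈ B.filter (fun A => p (g A)), w A := by
  rw [← Finset.sum_fiberwise_of_maps_to (g := g)
    (t := (B.image g).filter p) (s := B.filter (fun A => p (g A)))
    (fun A hA => by
      simp only [Finset.mem_filter, Finset.mem_image] at hA ⊢
      exact ⟨⟨A, hA.1, rfl⟩, hA.2⟩) w]
  apply Finset.sum_congr rfl
  intro C hC
  have hpC : p C := (Finset.mem_filter.mp hC).2
  apply Finset.sum_congr _ (fun _ _ => rfl)
  ext A
  simp only [Finset.mem_filter]
  constructor
  · rintro ⟨hA, hg⟩
    exact ⟨⟨hA, hg ▸ hpC⟩, hg⟩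
  · rintro ⟨⟨hA, -⟩, hg⟩
    exact ⟨hA, hg⟩

end AuxLemmas

section Main

variable {V : Type} [Fintype V] [DecidableEq V] {G : SimpleGraph V}

/-- The set defining `fracHadwiger`. -/
def fracSet (G : SimpleGraph V) : Set ℝ :=
  {h : ℝ | ∃ B : Finset (Finset V), ∃ w : Finset V → ℝ,
    IsBramble G B ∧ IsValidWeight B w ∧ h = ∑ A ∈ B, w A}

def strongSet (G : SimpleGraph V) : Set ℝ :=
  {h : ℝ | ∃ B : Finset (Finset V), ∃ w : Finset V → ℝ,
    IsStrongBramble G B ∧ IsValidWeight B w ∧ h = ∑ A ∈ B, w A}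

lemma fracSet_le (h : ℝ) (hh : h ∈ fracSet G) : h ≤ (Fintype.card V : ℝ) := by
  obtain ⟨B, w, hB, hw, rfl⟩ := hh
  exact sum_le_card (fun A hA => conn_nonempty (hB.1 A hA)) hw

lemma bddAbove_fracSet : BddAbove (fracSet G) :=
  ⟨(Fintype.card V : ℝ), fun h hh => fracSet_le h hh⟩

lemma strongSet_subset_fracSet : strongSet G ⊆ fracSet G := by
  rintro h ⟨B, w, hB, hw, rfl⟩
  exact ⟨B, w, ⟨hB.1, fun A hA A' hA' => Or.inr (hB.2 A hA A' hA')⟩, hw, rfl⟩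

lemma bddAbove_strongSet : BddAbove (strongSet G) :=
  ⟨(Fintype.card V : ℝ), fun h hh => fracSet_le h (strongSet_subset_fracSet hh)⟩

lemma one_mem_strongSet (he : ∃ u v : V, G.Adj u v) : (1 : ℝ) ∈ strongSet G := by
  obtain ⟨u, v, huv⟩ := he
  refine ⟨{({u, v} : Finset V)}, fun _ => 1, ⟨?_, ?_⟩, ⟨fun _ _ => zero_le_one, ?_⟩, by simp⟩
  · intro A hA
    rw [Finset.mem_singleton] at hA
    subst hA
    have : (({u, v} : Finset V) : Set V) = ({u, v} : Set V) := by simp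
    rw [this]
    exact pair_connected huv
  · intro A hA A' hA'
    rw [Finset.mem_singleton] at hA hA'
    subst hA; subst hA'
    exact ⟨u, by simp, v, by simp, huv⟩
  · intro x
    calc ∑ A ∈ Finset.filter (fun A => x ∈ A) {({u, v} : Finset V)}, (1 : ℝ)
        ≤ ∑ A ∈ ({({u, v} : Finset V)} : Finset (Finset V)), (1 : ℝ) := by
          apply Finset.sum_le_sum_of_subset_of_nonneg (Finset.filter_subset _ _)
          intros; exact zero_le_one
      _ = 1 := by simp

lemma one_le_lowerFracHadwiger (he : ∃ u v : V, G.Adj u v) :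
    (1 : ℝ) ≤ lowerFracHadwiger G :=
  le_csSup bddAbove_strongSet (one_mem_strongSet he)

/-- Construction of an injective neighbour-selector for singleton bramble members. -/
lemma exists_sigma (B : Finset (Finset V)) (hB : IsBramble G B)
    (hnb : ∀ v : V, ({v} : Finset V) ∈ B → ∃ u, G.Adj v u) :
    ∃ σ : V → V, (∀ v, ({v} : Finset V) ∈ B → G.Adj v (σ v)) ∧
      ∀ v w, ({v} : Finset V) ∈ B → ({w} : Finset V) ∈ B → σ v = σ w → v = w := by
  classical
  set S : Finset V := Finset.univ.filter (fun v => ({v} : Finset V) ∈ B) with hS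
  have hmemS : ∀ v, v ∈ S ↔ ({v} : Finset V) ∈ B := by
    intro v; simp [hS]
  have hclique : ∀ v ∈ S, ∀ w ∈ S, v ≠ w → G.Adj v w := by
    intro v hv w hw hvw
    have h2 := hB.2 {v} ((hmemS v).mp hv) {w} ((hmemS w).mp hw)
    rcases h2 with ⟨x, hx1, hx2⟩ | ⟨a, ha, b, hb, hab⟩
    · rw [Finset.mem_singleton] at hx1 hx2
      exact absurd (hx1 ▸ hx2 : v = w).symm (Ne.symm hvw)
    · rw [Finset.mem_singleton] at ha hb
      subst ha; subst hb; exact hab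
  by_cases h2 : 2 ≤ S.card
  · haveI : NeZero S.card := ⟨by omega⟩
    let e := S.equivFin
    refine ⟨fun v => if hv : v ∈ S then (e.symm (e ⟨v, hv⟩ + 1) : V) else v, ?_, ?_⟩
    · intro v hvB
      have hv : v ∈ S := (hmemS v).mpr hvB
      simp only [dif_pos hv]
      set u := e.symm (e ⟨v, hv⟩ + 1) with hu
      have hne : (⟨v, hv⟩ : S) ≠ u := by
        intro h
        have : e ⟨v, hv⟩ = e ⟨v, hv⟩ + 1 := by
          conv_lhs => rw [h, hu, Equiv.apply_symm_apply]
        have h1 : (1 : Fin S.card) = 0 := by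
          have := left_eq_add.mp this
          exact this
        rw [Fin.one_eq_zero_iff] at h1
        omega
      have hvne : v ≠ (u : V) := fun h => hne (Subtype.ext h)
      exact hclique v hv (u : V) u.2 hvne
    · intro v w hvB hwB heq
      have hv : v ∈ S := (hmemS v).mpr hvB
      have hw : w ∈ S := (hmemS w).mpr hwB
      simp only [dif_pos hv, dif_pos hw] at heq
      have : e.symm (e ⟨v, hv⟩ + 1) = e.symm (e ⟨w, hw⟩ + 1) := Subtype.ext heq
      have := e.symm.injective this
      have := add_right_cancel this
      have := e.injective this
      exact congrArg Subtype.val this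
  · rcases S.eq_empty_or_nonempty with hSe | ⟨v0, hv0⟩
    · refine ⟨id, ?_, ?_⟩
      · intro v hvB
        exact absurd ((hmemS v).mpr hvB) (by simp [hSe])
      · intro v w hvB _ _
        exact absurd ((hmemS v).mpr hvB) (by simp [hSe])
    · obtain ⟨u0, hu0⟩ := hnb v0 ((hmemS v0).mp hv0)
      have hSsingle : ∀ v ∈ S, v = v0 := by
        intro v hv
        by_contra hne
        have : 2 ≤ S.card := Finset.one_lt_card.mpr ⟨v, hv, v0, hv0, hne⟩
        omega
      refine ⟨fun _ => u0, ?_, ?_⟩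
      · intro v hvB
        have := hSsingle v ((hmemS v).mpr hvB)
        subst this; exact hu0
      · intro v w hvB hwB _
        rw [hSsingle v ((hmemS v).mpr hvB), hSsingle w ((hmemS w).mpr hwB)]

lemma key_le (he : ∃ u v : V, G.Adj u v) (h : ℝ) (hmem : h ∈ fracSet G) :
    h ≤ 2 * lowerFracHadwiger G := by
  classical
  obtain ⟨B, w, hB, hw, rfl⟩ := hmem
  have hLB1 : (1 : ℝ) ≤ lowerFracHadwiger G := one_le_lowerFracHadwiger he
  have hnonempty : ∀ A ∈ B, A.Nonempty := fun A hA => conn_nonempty (hB.1 A hA)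
  by_cases hdeg : ∃ v, ({v} : Finset V) ∈ B ∧ ∀ u, ¬ G.Adj v u
  · -- degenerate case: an isolated singleton; every member contains v, so total ≤ 1
    obtain ⟨v0, hv0, hiso⟩ := hdeg
    have hall : ∀ A ∈ B, v0 ∈ A := by
      intro A hA
      rcases hB.2 A hA {v0} hv0 with ⟨x, hx1, hx2⟩ | ⟨a, _, b, hb, hab⟩
      · rwa [Finset.mem_singleton.mp hx2] at hx1
      · rw [Finset.mem_singleton] at hb
        subst hb
        exact absurd hab.symm (hiso a)
    have : ∑ A ∈ B, w A ≤ 1 := by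
      have : B.filter (fun A => v0 ∈ A) = B := Finset.filter_true_of_mem hall
      calc ∑ A ∈ B, w A = ∑ A ∈ B.filter (fun A => v0 ∈ A), w A := by rw [this]
        _ ≤ 1 := hw.2 v0
    linarith
  · push_neg at hdeg
    obtain ⟨σ, hσ1, hσ2⟩ := exists_sigma B hB hdeg
    set aug : Finset V → Finset V :=
      fun A => if 2 ≤ A.card then A else A ∪ A.image σ with haug
    have hsub : ∀ A, A ⊆ aug A := by
      intro A
      by_cases h2 : 2 ≤ A.card <;> simp [haug, h2, Finset.subset_union_left]
    have hmem_aug : ∀ A ∈ B, ∀ x, x ∈ aug A →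
        x ∈ A ∨ ∃ v, A = {v} ∧ ({v} : Finset V) ∈ B ∧ x = σ v := by
      intro A hA x hx
      by_cases h2 : 2 ≤ A.card
      · left; simpa [haug, h2] using hx
      · have hc1 : A.card = 1 := by
          have := (hnonempty A hA).card_pos; omega
        obtain ⟨v, hv⟩ := Finset.card_eq_one.mp hc1
        subst hv
        simp only [haug, if_neg h2, Finset.mem_union, Finset.mem_image,
          Finset.mem_singleton] at hx
        rcases hx with hx | ⟨a, ha, hax⟩
        · left; simp [hx]
        · right; exact ⟨v, rfl, hA, by rw [← hax, ha]⟩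
    have haug_singleton : ∀ v, ({v} : Finset V) ∈ B →
        aug ({v} : Finset V) = {v, σ v} := by
      intro v hv
      have h2 : ¬ 2 ≤ ({v} : Finset V).card := by simp
      simp only [haug, if_neg h2]
      rw [Finset.image_singleton]
      rfl
    set B' : Finset (Finset V) := B.image aug with hB'
    set w' : Finset V → ℝ :=
      fun C => (∑ A ∈ B.filter (fun A => aug A = C), w A) / 2 with hw'
    -- total weight
    have htotal : ∑ C ∈ B', w' C = (∑ A ∈ B, w A) / 2 := by
      rw [hw', ← Finset.sum_div]
      congr 1
      exact Finset.sum_fiberwise_of_maps_to (fun A hA => Finset.mem_image_of_mem _ hA) w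
    -- strong bramble
    have hstrong : IsStrongBramble G B' := by
      constructor
      · intro C hC
        obtain ⟨A, hA, rfl⟩ := Finset.mem_image.mp hC
        by_cases h2 : 2 ≤ A.card
        · have : aug A = A := by simp [haug, h2]
          rw [this]; exact hB.1 A hA
        · have hc1 : A.card = 1 := by
            have := (hnonempty A hA).card_pos; omega
          obtain ⟨v, hv⟩ := Finset.card_eq_one.mp hc1
          subst hv
          rw [haug_singleton v hA]
          have hcoe : ((({v, σ v} : Finset V)) : Set V) = ({v, σ v} : Set V) := by simp
          rw [hcoe]
          exact pair_connected (hσ1 v hA)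
      · intro C hC C' hC'
        obtain ⟨A, hA, rfl⟩ := Finset.mem_image.mp hC
        obtain ⟨A', hA', rfl⟩ := Finset.mem_image.mp hC'
        by_cases hAA : A = A'
        · subst hAA
          by_cases h2 : 2 ≤ A.card
          · obtain ⟨x, hx⟩ := hnonempty A hA
            obtain ⟨y, hy, hxy⟩ := exists_adj_of_mem (hB.1 A hA) h2 hx
            exact ⟨x, hsub A hx, y, hsub A hy, hxy⟩
          · have hc1 : A.card = 1 := by
              have := (hnonempty A hA).card_pos; omega
            obtain ⟨v, hv⟩ := Finset.card_eq_one.mp hc1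
            subst hv
            rw [haug_singleton v hA]
            exact ⟨v, by simp, σ v, by simp, hσ1 v hA⟩
        · rcases hB.2 A hA A' hA' with ⟨x, hxA, hxA'⟩ | ⟨a, ha, b, hb, hab⟩
          · by_cases h2 : 2 ≤ A.card
            · obtain ⟨y, hy, hxy⟩ := exists_adj_of_mem (hB.1 A hA) h2 hxA
              exact ⟨y, hsub A hy, x, hsub A' hxA', hxy.symm⟩
            · by_cases h2' : 2 ≤ A'.card
              · obtain ⟨y, hy, hxy⟩ := exists_adj_of_mem (hB.1 A' hA') h2' hxA'
                exact ⟨x, hsub A hxA, y, hsub A' hy, hxy⟩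
              · exfalso
                have hc1 : A.card = 1 := by
                  have := (hnonempty A hA).card_pos; omega
                have hc1' : A'.card = 1 := by
                  have := (hnonempty A' hA').card_pos; omega
                obtain ⟨v, hv⟩ := Finset.card_eq_one.mp hc1
                obtain ⟨v', hv'⟩ := Finset.card_eq_one.mp hc1'
                subst hv; subst hv'
                rw [Finset.mem_singleton] at hxA hxA'
                exact hAA (by rw [← hxA, ← hxA'])
          · exact ⟨a, hsub A ha, b, hsub A' hb, hab⟩
    -- valid weights
    have hvalid : IsValidWeight B' w' := by
      constructor
      · intro C _
        apply div_nonneg _ (by norm_num)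
        apply Finset.sum_nonneg
        intro A hA
        exact hw.1 A (Finset.mem_filter.mp hA).1
      · intro x
        have hload : ∑ C ∈ B'.filter (fun C => x ∈ C), w' C
            = (∑ A ∈ B.filter (fun A => x ∈ aug A), w A) / 2 := by
          rw [hw', ← Finset.sum_div]
          congr 1
          exact fiber_sum B aug w (fun C => x ∈ C)
        rw [hload]
        rw [div_le_one (by norm_num)]
        -- bound the numerator by 2
        have hsplit : B.filter (fun A => x ∈ aug A)
            ⊆ B.filter (fun A => x ∈ A) ∪ B.filter (fun A => x ∉ A ∧ x ∈ aug A) := by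
          intro A hA
          rw [Finset.mem_filter] at hA
          rw [Finset.mem_union, Finset.mem_filter, Finset.mem_filter]
          by_cases hxA : x ∈ A
          · exact Or.inl ⟨hA.1, hxA⟩
          · exact Or.inr ⟨hA.1, hxA, hA.2⟩
        have hdisj : Disjoint (B.filter (fun A => x ∈ A))
            (B.filter (fun A => x ∉ A ∧ x ∈ aug A)) := by
          rw [Finset.disjoint_left]
          intro A hA1 hA2
          exact (Finset.mem_filter.mp hA2).2.1 (Finset.mem_filter.mp hA1).2
        have h1 : ∑ A ∈ B.filter (fun A => x ∈ aug A), w A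
            ≤ ∑ A ∈ B.filter (fun A => x ∈ A) ∪ B.filter (fun A => x ∉ A ∧ x ∈ aug A),
                w A := by
          apply Finset.sum_le_sum_of_subset_of_nonneg hsplit
          intro A hA _
          rw [Finset.mem_union, Finset.mem_filter, Finset.mem_filter] at hA
          exact hw.1 A (hA.elim (fun h => h.1) (fun h => h.1))
        rw [Finset.sum_union hdisj] at h1
        have hbound1 : ∑ A ∈ B.filter (fun A => x ∈ A), w A ≤ 1 := hw.2 x
        have hbound2 : ∑ A ∈ B.filter (fun A => x ∉ A ∧ x ∈ aug A), w A ≤ 1 := by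
          set F := B.filter (fun A => x ∉ A ∧ x ∈ aug A) with hF
          have hFeq : ∀ A1 ∈ F, ∀ A2 ∈ F, A1 = A2 := by
            intro A1 hA1 A2 hA2
            rw [hF, Finset.mem_filter] at hA1 hA2
            rcases hmem_aug A1 hA1.1 x hA1.2.2 with hx | ⟨v1, hv1, hv1B, hxv1⟩
            · exact absurd hx hA1.2.1
            rcases hmem_aug A2 hA2.1 x hA2.2.2 with hx | ⟨v2, hv2, hv2B, hxv2⟩
            · exact absurd hx hA2.2.1
            have : v1 = v2 := hσ2 v1 v2 hv1B hv2B (by rw [← hxv1, ← hxv2])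
            rw [hv1, hv2, this]
          rcases F.eq_empty_or_nonempty with hFe | ⟨A0, hA0⟩
          · rw [hFe]; simp
          · have hFsub : F ⊆ {A0} := by
              intro A hA
              rw [Finset.mem_singleton]
              exact hFeq A hA A0 hA0
            calc ∑ A ∈ F, w A ≤ ∑ A ∈ ({A0} : Finset (Finset V)), w A := by
                  apply Finset.sum_le_sum_of_subset_of_nonneg hFsub
                  intro A hA hAF
                  rw [Finset.mem_singleton] at hA
                  exact absurd (hA ▸ hA0) hAF
              _ = w A0 := Finset.sum_singleton _ _
              _ ≤ 1 := by
                  have hA0B := (Finset.mem_filter.mp (hF ▸ hA0)).1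
                  exact w_le_one hw hA0B (hnonempty A0 hA0B)
        linarith
    -- conclude
    have hmem' : ∑ C ∈ B', w' C ∈ strongSet G := ⟨B', w', hstrong, hvalid, rfl⟩
    have := le_csSup bddAbove_strongSet hmem'
    rw [htotal] at this
    have : (∑ A ∈ B, w A) / 2 ≤ lowerFracHadwiger G := this
    linarith

end Main

/-- if `G` has an edge then `h_f(G)/2 ≤ h'_f(G) ≤ h_f(G)`. -/
theorem lowerFracHadwiger_bounds
    {V : Type} [Fintype V] [DecidableEq V] (G : SimpleGraph V)
    (he : ∃ u v : V, G.Adj u v) :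
    fracHadwiger G / 2 ≤ lowerFracHadwiger G ∧ lowerFracHadwiger G ≤ fracHadwiger G := by
  have h1 : (1 : ℝ) ≤ lowerFracHadwiger G := one_le_lowerFracHadwiger he
  constructor
  · have hle : fracHadwiger G ≤ 2 * lowerFracHadwiger G := by
      apply Real.sSup_le
      · intro h hh
        exact key_le he h hh
      · linarith
    linarith
  · exact csSup_le_csSup bddAbove_fracSet ⟨1, one_mem_strongSet he⟩
      strongSet_subset_fracSet
end

section
/- Fix 0 < ε < 1, let n be a positive integer, set d = √((1−ε)·log₂ n) and h = ⌈4·n^{1−ε}·d·ln n⌉, and assume d ≥ 1. Then the proportion of labeled graphs on the vertex set {1,…,n} that contain a clique minor of order at least h and breadth at most d is at most n^{d·h} · e^{−n^{ε−1}·h(h−1)/2}. -/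
open Finset

open scoped Classical in
noncomputable def graphEquiv (n : ℕ) :
    SimpleGraph (Fin n) ≃ ({e : Sym2 (Fin n) // ¬ e.IsDiag} → Bool) where
  toFun G e := decide (e.1 ∈ G.edgeSet)
  invFun b := SimpleGraph.fromEdgeSet {e | ∃ h : ¬ e.IsDiag, b ⟨e, h⟩ = true}
  left_inv G := by
    ext a c
    simp only [SimpleGraph.fromEdgeSet_adj, Set.mem_setOf_eq, decide_eq_true_eq,
      SimpleGraph.mem_edgeSet]
    constructor
    · rintro ⟨⟨_, hadj⟩, _⟩; exact hadj
    · intro hadj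
      exact ⟨⟨by simp [Sym2.isDiag_iff_proj_eq, hadj.ne], hadj⟩, hadj.ne⟩
  right_inv b := by
    funext e
    obtain ⟨e, he⟩ := e
    simp only [SimpleGraph.edgeSet_fromEdgeSet, Set.mem_diff, Set.mem_setOf_eq]
    by_cases hb : b ⟨e, he⟩ = true
    · simp [he, hb]
    · simp only [Bool.not_eq_true] at hb
      simp [he, hb]

open scoped Classical in
noncomputable def Sset {n : ℕ} (h : ℕ) (f : Fin h → Finset (Fin n)) (p : Fin h × Fin h) :
    Finset {e : Sym2 (Fin n) // ¬ e.IsDiag} :=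
  ((f p.1 ×ˢ f p.2).image (fun q => s(q.1, q.2))).subtype (fun e => ¬ e.IsDiag)

lemma Sset_disjoint {n h : ℕ} {f : Fin h → Finset (Fin n)}
    (hf : ∀ i j, i ≠ j → Disjoint (f i) (f j)) {p q : Fin h × Fin h}
    (hp : p.1 < p.2) (hq : q.1 < q.2) (hpq : p ≠ q) :
    Disjoint (Sset h f p) (Sset h f q) := by
  classical
  have hcol : ∀ (i j : Fin h) (a : Fin n), a ∈ f i → a ∈ f j → i = j := by
    intro i j a hi hj
    by_contra hij
    exact (Finset.disjoint_left.mp (hf i j hij) hi) hj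
  rw [Finset.disjoint_left]
  rintro ⟨e, hdiag⟩ hep heq
  simp only [Sset, Finset.mem_subtype, Finset.mem_image, Finset.mem_product] at hep heq
  obtain ⟨⟨a, c⟩, ⟨ha, hc⟩, hac⟩ := hep
  obtain ⟨⟨a', c'⟩, ⟨ha', hc'⟩, hac'⟩ := heq
  rw [← hac'] at hac
  rcases Sym2.eq_iff.mp hac with ⟨h1, h2⟩ | ⟨h1, h2⟩
  · subst h1; subst h2
    exact hpq (Prod.ext (hcol _ _ a ha ha') (hcol _ _ c hc hc'))
  · subst h1; subst h2
    have e1 : p.1 = q.2 := hcol _ _ a ha hc'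
    have e2 : p.2 = q.1 := hcol _ _ c hc ha'
    have : p.1 < p.1 := by
      calc p.1 < p.2 := hp
        _ = q.1 := e2
        _ < q.2 := hq
        _ = p.1 := e1.symm
    exact lt_irrefl _ this

lemma card_ne_false (β : Type) [Fintype β] [DecidableEq β] :
    Nat.card {c : β → Bool // c ≠ fun _ => false} = 2 ^ Fintype.card β - 1 := by
  rw [Nat.card_eq_fintype_card]
  have h1 : Fintype.card {c : β → Bool // c = fun _ => false} = 1 :=
    Fintype.card_subtype_eq _
  have := Fintype.card_subtype_compl (fun c : β → Bool => c = fun _ => false)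
  rw [this, h1, Fintype.card_fun, Fintype.card_bool]

lemma step_count {α : Type} [Fintype α] [DecidableEq α] (T : Finset α)
    (R : (α → Bool) → Prop)
    (hR : ∀ b b' : α → Bool, (∀ a ∉ T, b a = b' a) → R b → R b') :
    (Nat.card {b : α → Bool // R b ∧ ∃ a ∈ T, b a = true} : ℝ) ≤
      (Nat.card {b : α → Bool // R b} : ℝ) * (1 - (2:ℝ)⁻¹ ^ T.card) := by
  classical
  set e := Equiv.piEquivPiSubtypeProd (fun a => a ∈ T) (fun _ => Bool) with he
  set R' : ({a // a ∉ T} → Bool) → Prop := fun c => R (e.symm ((fun _ => false), c)) with hR'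
  have hkey : ∀ b : α → Bool, R b ↔ R' (e b).2 := by
    intro b
    have hag : ∀ a ∉ T, b a = (e.symm ((fun _ => false), (e b).2)) a := by
      intro a ha
      simp [he, Equiv.piEquivPiSubtypeProd, dif_neg ha]
    constructor
    · intro hb; exact hR _ _ hag hb
    · intro hb; exact hR _ _ (fun a ha => (hag a ha).symm) hb
  have hhit : ∀ b : α → Bool, (∃ a ∈ T, b a = true) ↔ (e b).1 ≠ fun _ => false := by
    intro b
    simp only [he, Equiv.piEquivPiSubtypeProd, Equiv.coe_fn_mk, Ne, funext_iff,
      not_forall]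
    constructor
    · rintro ⟨a, ha, hb⟩; exact ⟨⟨a, ha⟩, by simp [hb]⟩
    · rintro ⟨⟨a, ha⟩, hb⟩; exact ⟨a, ha, by simpa using hb⟩
  have c1 : Nat.card {b : α → Bool // R b ∧ ∃ a ∈ T, b a = true}
      = Nat.card ({c1 : {a // a ∈ T} → Bool // c1 ≠ fun _ => false}
          × {c2 : {a // a ∉ T} → Bool // R' c2}) := by
    refine Nat.card_congr ?_
    refine (Equiv.subtypeEquiv e (fun b => ?_)).trans (Equiv.subtypeProdEquivProd)
    rw [and_comm]
    exact and_congr (hhit b) (hkey b)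
  have c2 : Nat.card {b : α → Bool // R b}
      = Nat.card (({a // a ∈ T} → Bool) × {c2 : {a // a ∉ T} → Bool // R' c2}) := by
    refine Nat.card_congr ?_
    refine (Equiv.subtypeEquiv (q := fun c => R' c.2) e (fun b => hkey b)).trans ?_
    exact
      { toFun := fun c => (c.1.1, ⟨c.1.2, c.2⟩)
        invFun := fun u => ⟨(u.1, u.2.1), u.2.2⟩
        left_inv := fun _ => rfl
        right_inv := fun _ => rfl }
  rw [c1, c2, Nat.card_prod, Nat.card_prod]
  rw [card_ne_false, Nat.card_eq_fintype_card (α := {a // a ∈ T} → Bool),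
    Fintype.card_fun, Fintype.card_bool, Fintype.card_coe]
  set M := Nat.card {c2 : {a // a ∉ T} → Bool // R' c2}
  set t := T.card
  push_cast [Nat.one_le_two_pow]
  have h2 : ((2:ℝ) ^ t) * ((2:ℝ)⁻¹ ^ t) = 1 := by
    rw [← mul_pow]; norm_num
  nlinarith [Nat.cast_nonneg (α := ℝ) M]

lemma prod_count {α ι : Type} [Fintype α] [DecidableEq α] [DecidableEq ι]
    (S : ι → Finset α) : ∀ (P : Finset ι),
    (∀ p ∈ P, ∀ q ∈ P, p ≠ q → Disjoint (S p) (S q)) →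
    (Nat.card {b : α → Bool // ∀ p ∈ P, ∃ a ∈ S p, b a = true} : ℝ) ≤
      (2:ℝ) ^ (Fintype.card α) * ∏ p ∈ P, (1 - (2:ℝ)⁻¹ ^ (S p).card) := by
  intro P
  induction P using Finset.induction_on with
  | empty =>
    intro _
    rw [Finset.prod_empty, mul_one]
    have : Nat.card {b : α → Bool // ∀ p ∈ (∅ : Finset ι), ∃ a ∈ S p, b a = true}
        = Nat.card (α → Bool) := Nat.card_congr (Equiv.subtypeUnivEquiv (by simp))
    rw [this, Nat.card_eq_fintype_card, Fintype.card_fun, Fintype.card_bool]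
    push_cast
    exact le_refl _
  | @insert q P hq ih =>
    intro hdisj
    have hdisj' : ∀ p ∈ P, ∀ r ∈ P, p ≠ r → Disjoint (S p) (S r) := fun p hp r hr =>
      hdisj p (Finset.mem_insert_of_mem hp) r (Finset.mem_insert_of_mem hr)
    set R : (α → Bool) → Prop := fun b => ∀ p ∈ P, ∃ a ∈ S p, b a = true with hRdef
    have hcongr : Nat.card {b : α → Bool // ∀ p ∈ insert q P, ∃ a ∈ S p, b a = true}
        = Nat.card {b : α → Bool // R b ∧ ∃ a ∈ S q, b a = true} := by
      refine Nat.card_congr (Equiv.subtypeEquivRight (fun b => ?_))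
      rw [Finset.forall_mem_insert, and_comm]
    have hR : ∀ b b' : α → Bool, (∀ a ∉ S q, b a = b' a) → R b → R b' := by
      intro b b' hag hb p hp
      obtain ⟨a, ha, hba⟩ := hb p hp
      have haq : a ∉ S q := by
        intro hmem
        have := hdisj p (Finset.mem_insert_of_mem hp) q (Finset.mem_insert_self q P)
          (fun hpq => hq (hpq ▸ hp))
        exact (Finset.disjoint_left.mp this ha) hmem
      exact ⟨a, ha, (hag a haq) ▸ hba⟩
    have hfac0 : (0:ℝ) ≤ 1 - (2:ℝ)⁻¹ ^ (S q).card := by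
      have : (2:ℝ)⁻¹ ^ (S q).card ≤ 1 := pow_le_one₀ (by norm_num) (by norm_num)
      linarith
    calc (Nat.card {b : α → Bool // ∀ p ∈ insert q P, ∃ a ∈ S p, b a = true} : ℝ)
        = (Nat.card {b : α → Bool // R b ∧ ∃ a ∈ S q, b a = true} : ℝ) := by rw [hcongr]
      _ ≤ (Nat.card {b : α → Bool // R b} : ℝ) * (1 - (2:ℝ)⁻¹ ^ (S q).card) :=
          step_count (S q) R hR
      _ ≤ ((2:ℝ) ^ (Fintype.card α) * ∏ p ∈ P, (1 - (2:ℝ)⁻¹ ^ (S p).card))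
            * (1 - (2:ℝ)⁻¹ ^ (S q).card) :=
          mul_le_mul_of_nonneg_right (ih hdisj') hfac0
      _ = (2:ℝ) ^ (Fintype.card α) * ∏ p ∈ insert q P, (1 - (2:ℝ)⁻¹ ^ (S p).card) := by
          rw [Finset.prod_insert hq]; ring

lemma card_small_sets (n k : ℕ) :
    Nat.card {A : Finset (Fin n) // A.Nonempty ∧ A.card ≤ k} ≤ n ^ k := by
  classical
  rcases Nat.eq_zero_or_pos n with rfl | hn
  · have : IsEmpty {A : Finset (Fin 0) // A.Nonempty ∧ A.card ≤ k} := by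
      constructor
      rintro ⟨A, ⟨a, _⟩, _⟩
      exact a.elim0
    simp [Nat.card_of_isEmpty]
  · set x0 : Fin n := ⟨0, hn⟩
    set g : {A : Finset (Fin n) // A.Nonempty ∧ A.card ≤ k} → (Fin k → Fin n) :=
      fun A i => (A.1.sort (· ≤ ·)).getD (min i.val ((A.1.sort (· ≤ ·)).length - 1)) x0
      with hg
    have himg : ∀ A, Finset.image (g A) Finset.univ = A.1 := by
      rintro ⟨A, hne, hcard⟩
      set l := A.sort (· ≤ ·) with hl
      have hlen : l.length = A.card := Finset.length_sort _
      have hlen1 : 1 ≤ l.length := by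
        rw [hlen]; exact Finset.card_pos.mpr hne
      ext a
      simp only [Finset.mem_image, Finset.mem_univ, true_and]
      constructor
      · rintro ⟨i, rfl⟩
        have hlt : min i.val (l.length - 1) < l.length := by omega
        have hgd : g ⟨A, hne, hcard⟩ i = l[min i.val (l.length - 1)] :=
          List.getD_eq_getElem l x0 hlt
        rw [hgd]
        exact (Finset.mem_sort _).mp (List.getElem_mem _)
      · intro ha
        have : a ∈ l := (Finset.mem_sort _).mpr ha
        obtain ⟨j, hj, rfl⟩ := List.mem_iff_getElem.mp this
        have hjk : j < k := lt_of_lt_of_le hj (hlen ▸ hcard)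
        refine ⟨⟨j, hjk⟩, ?_⟩
        have hmin : min j (l.length - 1) = j := by omega
        show l.getD (min j (l.length - 1)) x0 = l[j]
        rw [hmin]
        exact List.getD_eq_getElem l x0 hj
    have hinj : Function.Injective g := by
      intro A B hAB
      have : A.1 = B.1 := by rw [← himg A, ← himg B, hAB]
      exact Subtype.ext this
    calc Nat.card {A : Finset (Fin n) // A.Nonempty ∧ A.card ≤ k}
        ≤ Nat.card (Fin k → Fin n) := Nat.card_le_card_of_injective g hinj
      _ = n ^ k := by
          rw [Nat.card_eq_fintype_card, Fintype.card_fun]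
          simp

lemma two_mul_card_lt_pairs (h : ℕ) :
    2 * (Finset.univ.filter (fun p : Fin h × Fin h => p.1 < p.2)).card = h * (h - 1) := by
  classical
  set L := Finset.univ.filter (fun p : Fin h × Fin h => p.1 < p.2) with hL
  set Gt := Finset.univ.filter (fun p : Fin h × Fin h => p.2 < p.1) with hG
  have hcard : L.card = Gt.card := by
    refine Finset.card_bij (fun p _ => p.swap) ?_ ?_ ?_
    · intro p hp
      simp only [hL, Finset.mem_filter, Finset.mem_univ, true_and] at hp
      simp [hG, hp]
    · intro p hp q hq hpq
      exact Prod.swap_injective hpq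
    · intro p hp
      simp only [hG, Finset.mem_filter, Finset.mem_univ, true_and] at hp
      exact ⟨p.swap, by simp [hL, hp], by simp⟩
  have hdisj : Disjoint L Gt := by
    rw [Finset.disjoint_left]
    intro p hp hq
    simp only [hL, hG, Finset.mem_filter, Finset.mem_univ, true_and] at hp hq
    exact absurd hq (not_lt.mpr hp.le)
  have hunion : L ∪ Gt = Finset.univ.offDiag := by
    ext p
    simp only [hL, hG, Finset.mem_union, Finset.mem_filter, Finset.mem_univ, true_and,
      Finset.mem_offDiag]
    constructor
    · rintro (hlt | hgt)
      · exact hlt.ne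
      · exact hgt.ne'
    · intro hne
      exact lt_or_gt_of_ne hne
  have hoff : (Finset.univ.offDiag : Finset ((Fin h) × (Fin h))).card = h * h - h := by
    rw [Finset.offDiag_card]
    simp
  have hu := Finset.card_union_of_disjoint hdisj
  rw [hunion, hoff, ← hcard] at hu
  have hms : ∀ m : ℕ, m * (m - 1) = m * m - m := by
    intro m
    rcases m with _ | m
    · simp
    · simp [Nat.succ_sub_one, Nat.mul_succ]
  have := hms h
  omega

/-- the proportion of labeled graphs on `{1,…,n}` containing a clique minor of
order at least `h = ⌈4 n^{1-ε} d ln n⌉` and breadth at most `d = √((1-ε) log₂ n)` is at most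
`n^{d h} e^{-n^{ε-1} h(h-1)/2}`. -/
theorem proportion_with_broad_clique_minor_le
    (ε : ℝ) (hε0 : 0 < ε) (hε1 : ε < 1) (n : ℕ) (hn : 0 < n)
    (d : ℝ) (hd : d = Real.sqrt ((1 - ε) * Real.logb 2 (n : ℝ)))
    (h : ℕ) (hh : h = ⌈4 * (n : ℝ) ^ ((1 : ℝ) - ε) * d * Real.log (n : ℝ)⌉₊)
    (hd1 : 1 ≤ d) :
    (Nat.card {G : SimpleGraph (Fin n) // ∃ t : ℕ, h ≤ t ∧ HasCliqueMinorBreadth G t d} : ℝ)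
        / (Nat.card (SimpleGraph (Fin n)) : ℝ)
      ≤ (n : ℝ) ^ (d * (h : ℝ)) *
        Real.exp (-(n : ℝ) ^ (ε - 1) * ((h : ℝ) * ((h : ℝ) - 1) / 2)) := by
  classical
  have hd0 : 0 ≤ d := le_trans zero_le_one hd1
  have harg0 : 0 ≤ (1 - ε) * Real.logb 2 n := by
    by_contra hneg
    push_neg at hneg
    rw [hd, Real.sqrt_eq_zero'.mpr hneg.le] at hd1
    linarith
  have hdsq : d ^ 2 = (1 - ε) * Real.logb 2 n := by
    rw [hd, Real.sq_sqrt harg0]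
  have hlogb : 1 < Real.logb 2 n := by
    have h1 : 1 ≤ (1 - ε) * Real.logb 2 n := by nlinarith [hdsq, hd1, hd0]
    by_contra hL
    push_neg at hL
    have := mul_le_mul_of_nonneg_left hL (by linarith : (0:ℝ) ≤ 1 - ε)
    nlinarith
  have hn0R : (0:ℝ) < n := by exact_mod_cast hn
  have hn2 : (2:ℝ) < n := by
    have heq : (2:ℝ) ^ (Real.logb 2 n) = n :=
      Real.rpow_logb (by norm_num) (by norm_num) hn0R
    calc (2:ℝ) = 2 ^ (1:ℝ) := (Real.rpow_one 2).symm
      _ < 2 ^ (Real.logb 2 n) := Real.rpow_lt_rpow_of_exponent_lt one_lt_two hlogb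
      _ = n := heq
  have hn1R : (1:ℝ) < n := by linarith
  have hlogn : 0 < Real.log n := Real.log_pos hn1R
  have hh1 : 1 ≤ h := by
    rw [hh]
    refine Nat.one_le_ceil_iff.mpr ?_
    have h1 : (0:ℝ) < (n:ℝ) ^ ((1:ℝ) - ε) := Real.rpow_pos_of_pos hn0R _
    have : (0:ℝ) < 4 * (n:ℝ) ^ ((1:ℝ) - ε) * d := by positivity
    positivity
  set k := ⌊d⌋₊ with hk
  have hkd : (k:ℝ) ≤ d := Nat.floor_le hd0
  have hk1 : 1 ≤ k := Nat.le_floor (by exact_mod_cast hd1)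
  set m := Fintype.card {e : Sym2 (Fin n) // ¬ e.IsDiag} with hm
  have hden : (Nat.card (SimpleGraph (Fin n)) : ℝ) = 2 ^ m := by
    rw [Nat.card_congr (graphEquiv n), Nat.card_eq_fintype_card, Fintype.card_fun,
      Fintype.card_bool]
    push_cast
    rfl
  set x := (n:ℝ) ^ (ε - 1) with hxdef
  have hx0 : 0 ≤ x := Real.rpow_nonneg (le_of_lt hn0R) _
  have hx1 : x ≤ 1 := Real.rpow_le_one_of_one_le_of_nonpos (by linarith) (by linarith)
  have hxle : ∀ s : ℕ, s ≤ k * k → x ≤ (2:ℝ)⁻¹ ^ s := by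
    intro s hs
    have h1 : x = (2:ℝ) ^ (-(d ^ 2)) := by
      rw [hxdef, hdsq,
        show -((1 - ε) * Real.logb 2 n) = Real.logb 2 n * (ε - 1) by ring,
        Real.rpow_mul (by norm_num), Real.rpow_logb (by norm_num) (by norm_num) hn0R]
    have h2 : (2:ℝ)⁻¹ ^ s = (2:ℝ) ^ (-(s:ℝ)) := by
      rw [Real.rpow_neg (by norm_num), Real.rpow_natCast, inv_pow]
    rw [h1, h2]
    apply Real.rpow_le_rpow_of_exponent_le one_le_two
    have hs' : (s:ℝ) ≤ (k:ℝ) * k := by exact_mod_cast hs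
    nlinarith [hkd, hd0]
  set P : Finset (Fin h × Fin h) := Finset.univ.filter (fun p => p.1 < p.2) with hP
  -- union bound: choose a witness family for each graph with the property
  have key : ∀ G : SimpleGraph (Fin n), (∃ t : ℕ, h ≤ t ∧ HasCliqueMinorBreadth G t d) →
      ∃ f : Fin h → Finset (Fin n),
        ((∀ i, (f i).Nonempty) ∧ (∀ i, (f i).card ≤ k) ∧
          (∀ i j, i ≠ j → Disjoint (f i) (f j)))
        ∧ ∀ p ∈ P, ∃ a ∈ Sset h f p, graphEquiv n G a = true := by
    rintro G ⟨t, ht, f0, hne0, hconn0, hdis0, hadj0, hbr0⟩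
    refine ⟨fun i => f0 (Fin.castLE ht i),
      ⟨fun i => hne0 _, fun i => Nat.le_floor (hbr0 _),
        fun i j hij => hdis0 _ _ (fun hc => hij (Fin.castLE_injective ht hc))⟩, ?_⟩
    intro p hp
    have hlt : p.1 < p.2 := (Finset.mem_filter.mp hp).2
    have hne : Fin.castLE ht p.1 ≠ Fin.castLE ht p.2 :=
      fun hc => absurd (Fin.castLE_injective ht hc) hlt.ne
    obtain ⟨a, ha, c, hc, hadj⟩ := hadj0 _ _ hne
    refine ⟨⟨s(a, c), ?_⟩, ?_, ?_⟩
    · simp only [Sym2.isDiag_iff_proj_eq]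
      exact hadj.ne
    · simp only [Sset, Finset.mem_subtype, Finset.mem_image, Finset.mem_product]
      exact ⟨(a, c), ⟨ha, hc⟩, rfl⟩
    · simp only [graphEquiv, Equiv.coe_fn_mk, decide_eq_true_eq, SimpleGraph.mem_edgeSet]
      exact hadj
  choose ff hffGood hffQ using key
  -- the sigma type of (family, boolean edge function)
  haveI : ∀ f : {f : Fin h → Finset (Fin n) //
      (∀ i, (f i).Nonempty) ∧ (∀ i, (f i).card ≤ k) ∧
        (∀ i j, i ≠ j → Disjoint (f i) (f j))},
      Fintype {b : ({e : Sym2 (Fin n) // ¬ e.IsDiag} → Bool) //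
        ∀ p ∈ P, ∃ a ∈ Sset h f.1 p, b a = true} := fun f => Fintype.ofFinite _
  haveI : Fintype {f : Fin h → Finset (Fin n) //
      (∀ i, (f i).Nonempty) ∧ (∀ i, (f i).card ≤ k) ∧
        (∀ i j, i ≠ j → Disjoint (f i) (f j))} := Fintype.ofFinite _
  set F := {f : Fin h → Finset (Fin n) //
      (∀ i, (f i).Nonempty) ∧ (∀ i, (f i).card ≤ k) ∧
        (∀ i j, i ≠ j → Disjoint (f i) (f j))} with hF
  set Φ : {G : SimpleGraph (Fin n) // ∃ t : ℕ, h ≤ t ∧ HasCliqueMinorBreadth G t d} →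
      Σ f : F, {b : ({e : Sym2 (Fin n) // ¬ e.IsDiag} → Bool) //
        ∀ p ∈ P, ∃ a ∈ Sset h f.1 p, b a = true} :=
    fun x => ⟨⟨ff x.1 x.2, hffGood x.1 x.2⟩, ⟨graphEquiv n x.1, hffQ x.1 x.2⟩⟩ with hΦ
  have hΦinj : Function.Injective Φ := by
    intro u v huv
    have h2 := congrArg (fun s : (Σ f : F, {b : ({e : Sym2 (Fin n) // ¬ e.IsDiag} → Bool) //
        ∀ p ∈ P, ∃ a ∈ Sset h f.1 p, b a = true}) => (s.2 : {b : ({e : Sym2 (Fin n) // ¬ e.IsDiag} → Bool) // ∀ p ∈ P, ∃ a ∈ Sset h s.1.1 p, b a = true}).1) huv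
    exact Subtype.ext ((graphEquiv n).injective h2)
  have step1 : Nat.card {G : SimpleGraph (Fin n) // ∃ t : ℕ, h ≤ t ∧ HasCliqueMinorBreadth G t d}
      ≤ Nat.card (Σ f : F, {b : ({e : Sym2 (Fin n) // ¬ e.IsDiag} → Bool) //
        ∀ p ∈ P, ∃ a ∈ Sset h f.1 p, b a = true}) :=
    Nat.card_le_card_of_injective Φ hΦinj
  -- per-family bound
  have perf : ∀ f : F,
      (Nat.card {b : ({e : Sym2 (Fin n) // ¬ e.IsDiag} → Bool) //
        ∀ p ∈ P, ∃ a ∈ Sset h f.1 p, b a = true} : ℝ)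
      ≤ (2:ℝ) ^ m * (1 - x) ^ P.card := by
    intro f
    have hdisjS : ∀ p ∈ P, ∀ q ∈ P, p ≠ q → Disjoint (Sset h f.1 p) (Sset h f.1 q) := by
      intro p hp q hq hpq
      exact Sset_disjoint f.2.2.2 (Finset.mem_filter.mp hp).2 (Finset.mem_filter.mp hq).2 hpq
    refine le_trans (prod_count (Sset h f.1) P hdisjS) ?_
    rw [hm]
    refine mul_le_mul_of_nonneg_left ?_ (by positivity)
    have hcardS : ∀ p : Fin h × Fin h, (Sset h f.1 p).card ≤ k * k := by
      intro p
      calc (Sset h f.1 p).card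
          = (((f.1 p.1 ×ˢ f.1 p.2).image (fun q => s(q.1, q.2))).filter
              (fun e => ¬ e.IsDiag)).card := Finset.card_subtype _ _
        _ ≤ ((f.1 p.1 ×ˢ f.1 p.2).image (fun q => s(q.1, q.2))).card :=
            Finset.card_filter_le _ _
        _ ≤ (f.1 p.1 ×ˢ f.1 p.2).card := Finset.card_image_le
        _ = (f.1 p.1).card * (f.1 p.2).card := Finset.card_product _ _
        _ ≤ k * k := Nat.mul_le_mul (f.2.2.1 _) (f.2.2.1 _)
    calc ∏ p ∈ P, (1 - (2:ℝ)⁻¹ ^ (Sset h f.1 p).card)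
        ≤ ∏ p ∈ P, (1 - x) := by
          refine Finset.prod_le_prod (fun p _ => ?_) (fun p _ => ?_)
          · have : (2:ℝ)⁻¹ ^ (Sset h f.1 p).card ≤ 1 :=
              pow_le_one₀ (by norm_num) (by norm_num)
            linarith
          · have := hxle _ (hcardS p)
            linarith
      _ = (1 - x) ^ P.card := Finset.prod_const _
  -- count of families
  have hcF : (Nat.card F : ℝ) ≤ (n:ℝ) ^ (k * h) := by
    have hinj2 : Function.Injective
        (fun (f : F) (i : Fin h) =>
          (⟨f.1 i, f.2.1 i, f.2.2.1 i⟩ : {A : Finset (Fin n) // A.Nonempty ∧ A.card ≤ k})) := by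
      intro u v huv
      apply Subtype.ext
      funext i
      exact congrArg Subtype.val (congrFun huv i)
    haveI : Fintype {A : Finset (Fin n) // A.Nonempty ∧ A.card ≤ k} := Fintype.ofFinite _
    have h1 : Nat.card F ≤ Nat.card (Fin h → {A : Finset (Fin n) // A.Nonempty ∧ A.card ≤ k}) :=
      Nat.card_le_card_of_injective _ hinj2
    have h2 : Nat.card (Fin h → {A : Finset (Fin n) // A.Nonempty ∧ A.card ≤ k})
        = Nat.card {A : Finset (Fin n) // A.Nonempty ∧ A.card ≤ k} ^ h := by
      rw [Nat.card_eq_fintype_card, Fintype.card_fun, Fintype.card_fin,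
        Nat.card_eq_fintype_card]
    have h3 := card_small_sets n k
    have : Nat.card F ≤ (n ^ k) ^ h := by
      calc Nat.card F ≤ _ := h1
        _ = _ ^ h := h2
        _ ≤ (n ^ k) ^ h := Nat.pow_le_pow_left h3 h
    calc (Nat.card F : ℝ) ≤ ((n ^ k) ^ h : ℕ) := by exact_mod_cast this
      _ = (n:ℝ) ^ (k * h) := by push_cast [← pow_mul]; norm_num
  -- cardinality of pairs
  have hPcard : (P.card : ℝ) = (h:ℝ) * ((h:ℝ) - 1) / 2 := by
    have := two_mul_card_lt_pairs h
    have hcast : (2:ℝ) * P.card = (h:ℝ) * ((h:ℝ) - 1) := by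
      have h2 : ((2 * P.card : ℕ) : ℝ) = ((h * (h - 1) : ℕ) : ℝ) := by rw [this]
      push_cast [Nat.cast_sub hh1] at h2
      linarith
    linarith
  -- final chain
  rw [hden, div_le_iff₀ (by positivity)]
  have hsum : (Nat.card (Σ f : F, {b : ({e : Sym2 (Fin n) // ¬ e.IsDiag} → Bool) //
      ∀ p ∈ P, ∃ a ∈ Sset h f.1 p, b a = true}) : ℝ)
      ≤ (Nat.card F : ℝ) * ((2:ℝ) ^ m * (1 - x) ^ P.card) := by
    rw [Nat.card_eq_fintype_card, Fintype.card_sigma]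
    push_cast
    calc (∑ f : F, (Fintype.card {b : ({e : Sym2 (Fin n) // ¬ e.IsDiag} → Bool) //
          ∀ p ∈ P, ∃ a ∈ Sset h f.1 p, b a = true} : ℝ))
        ≤ ∑ _f : F, (2:ℝ) ^ m * (1 - x) ^ P.card := by
          refine Finset.sum_le_sum (fun f _ => ?_)
          rw [← Nat.card_eq_fintype_card]
          exact perf f
      _ = (Fintype.card F : ℝ) * ((2:ℝ) ^ m * (1 - x) ^ P.card) := by
          rw [Finset.sum_const, nsmul_eq_mul, Finset.card_univ]
      _ = (Nat.card F : ℝ) * ((2:ℝ) ^ m * (1 - x) ^ P.card) := by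
          rw [Nat.card_eq_fintype_card]
  have hA1 : (n:ℝ) ^ (k * h : ℕ) ≤ (n:ℝ) ^ (d * (h:ℝ)) := by
    rw [← Real.rpow_natCast (n:ℝ) (k * h)]
    refine Real.rpow_le_rpow_of_exponent_le (by linarith) ?_
    push_cast
    have : (k:ℝ) * h ≤ d * h := mul_le_mul_of_nonneg_right hkd (by positivity)
    linarith
  have hA2 : (1 - x) ^ P.card ≤ Real.exp (-x * ((h:ℝ) * ((h:ℝ) - 1) / 2)) := by
    have hstep : (1 - x) ≤ Real.exp (-x) := by
      have := Real.add_one_le_exp (-x)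
      linarith
    calc (1 - x) ^ P.card ≤ Real.exp (-x) ^ P.card :=
          pow_le_pow_left₀ (by linarith) hstep _
      _ = Real.exp ((P.card : ℝ) * (-x)) := by rw [← Real.exp_nat_mul]
      _ = Real.exp (-x * ((h:ℝ) * ((h:ℝ) - 1) / 2)) := by rw [hPcard]; ring_nf
  calc (Nat.card {G : SimpleGraph (Fin n) // ∃ t : ℕ, h ≤ t ∧ HasCliqueMinorBreadth G t d} : ℝ)
      ≤ (Nat.card (Σ f : F, {b : ({e : Sym2 (Fin n) // ¬ e.IsDiag} → Bool) //
          ∀ p ∈ P, ∃ a ∈ Sset h f.1 p, b a = true}) : ℝ) := by exact_mod_cast step1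
    _ ≤ (Nat.card F : ℝ) * ((2:ℝ) ^ m * (1 - x) ^ P.card) := hsum
    _ ≤ (n:ℝ) ^ (k * h : ℕ) * ((2:ℝ) ^ m * (1 - x) ^ P.card) := by
        refine mul_le_mul_of_nonneg_right hcF ?_
        have : (0:ℝ) ≤ (1 - x) ^ P.card := pow_nonneg (by linarith) _
        positivity
    _ = ((n:ℝ) ^ (k * h : ℕ) * (1 - x) ^ P.card) * (2:ℝ) ^ m := by ring
    _ ≤ ((n:ℝ) ^ (d * (h:ℝ)) * Real.exp (-x * ((h:ℝ) * ((h:ℝ) - 1) / 2))) * (2:ℝ) ^ m := by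
        refine mul_le_mul_of_nonneg_right ?_ (by positivity)
        exact mul_le_mul hA1 hA2 (pow_nonneg (by linarith) _) (by positivity)
end
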